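/- arXiv:1901.01179 — 6 statements merged into one kernel-verified Lean document; each statement's English description precedes it below -/
import Mathlib

section
/- For any càdlàg function f : [0,1] → E into a metric space (E,d) and any 0 ≤ σ < τ ≤ 1, the moduli Δ(f;(σ,τ)) = sup_{σ≤s≤t≤u≤τ} d(f(s),f(t)) ∧ d(f(t),f(u)) and N(f;(σ,τ)) = inf_{σ<θ≤τ} sup_{s∈[σ,θ), u∈[θ,τ]} [d(f(σ),f(s)) ∨ d(f(u),f(τ))] satisfy (1/2)·N(f;(σ,τ)) ≤ Δ(f;(σ,τ)) ≤ 2·N(f;(σ,τ)). -/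
open MeasureTheory Set Filter

noncomputable section

/-- `f` is càdlàg on `[0,1]`: right-continuous on `[0,1)` and with left limits on `(0,1]`. -/
def IsCadlagOn {E : Type*} [MetricSpace E] (f : ℝ → E) : Prop :=
  (∀ t ∈ Set.Ico (0:ℝ) 1, ContinuousWithinAt f (Set.Ici t) t) ∧
  (∀ t ∈ Set.Ioc (0:ℝ) 1, ∃ l : E, Filter.Tendsto f (nhdsWithin t (Set.Iio t)) (nhds l))

/-- `Δ(f;s,t,u) = d(f(s),f(t)) ∧ d(f(t),f(u))`. -/
def tripleDelta {E : Type*} [MetricSpace E] (f : ℝ → E) (s t u : ℝ) : ℝ :=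
  min (dist (f s) (f t)) (dist (f t) (f u))

/-- Standard modulus of càdlàguity `Δ(f;(σ,τ))`. -/
def deltaMod {E : Type*} [MetricSpace E] (f : ℝ → E) (σ τ : ℝ) : ℝ :=
  sSup {x : ℝ | ∃ s t u : ℝ, σ ≤ s ∧ s ≤ t ∧ t ≤ u ∧ u ≤ τ ∧ x = tripleDelta f s t u}

/-- Fernique's modulus `N(f;(σ,τ))`. -/
def fernMod {E : Type*} [MetricSpace E] (f : ℝ → E) (σ τ : ℝ) : ℝ :=
  sInf {x : ℝ | ∃ θ : ℝ, σ < θ ∧ θ ≤ τ ∧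
    x = sSup {y : ℝ | ∃ s u : ℝ, σ ≤ s ∧ s < θ ∧ θ ≤ u ∧ u ≤ τ ∧
      y = max (dist (f σ) (f s)) (dist (f u) (f τ))}}

/-- `N(f;η) = sup_{0 < τ - σ ≤ η} N(f;(σ,τ))` (with `0 ≤ σ < τ ≤ 1`). -/
def fernEta {E : Type*} [MetricSpace E] (f : ℝ → E) (η : ℝ) : ℝ :=
  sSup {x : ℝ | ∃ σ τ : ℝ, 0 ≤ σ ∧ σ < τ ∧ τ ≤ 1 ∧ τ - σ ≤ η ∧ x = fernMod f σ τ}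

/-- The set of quotients defining `[f]_μ`. -/
def holderSet {E : Type*} [MetricSpace E] (μ : ℝ) (f : ℝ → E) : Set ℝ :=
  {x : ℝ | ∃ s t u : ℝ, 0 ≤ s ∧ s ≤ t ∧ t ≤ u ∧ u ≤ 1 ∧
    x = tripleDelta f s t u / (u - s) ^ μ}

/-- `[f]_μ`. -/
def holderSemi {E : Type*} [MetricSpace E] (μ : ℝ) (f : ℝ → E) : ℝ :=
  sSup (holderSet μ f)

/-- The set of quotients defining `|f]_μ`. -/
def leftSet {E : Type*} [MetricSpace E] (μ : ℝ) (f : ℝ → E) : Set ℝ :=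
  {x : ℝ | ∃ t : ℝ, 0 < t ∧ t ≤ 1 ∧ x = dist (f 0) (f t) / t ^ μ}

/-- `|f]_μ = sup_{t ∈ (0,1]} d(f(0),f(t))/t^μ`. -/
def leftSemi {E : Type*} [MetricSpace E] (μ : ℝ) (f : ℝ → E) : ℝ :=
  sSup (leftSet μ f)

/-- The set of quotients defining `[f|_μ`. -/
def rightSet {E : Type*} [MetricSpace E] (μ : ℝ) (f : ℝ → E) : Set ℝ :=
  {x : ℝ | ∃ t : ℝ, 0 ≤ t ∧ t < 1 ∧ x = dist (f 1) (f t) / (1 - t) ^ μ}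

/-- `[f|_μ = sup_{t ∈ [0,1)} d(f(1),f(t))/(1-t)^μ`. -/
def rightSemi {E : Type*} [MetricSpace E] (μ : ℝ) (f : ℝ → E) : ℝ :=
  sSup (rightSet μ f)

/-- `[f]_{~μ} = sup_{η > 0} N(f;η)/η^μ`. -/
def tildeSemi {E : Type*} [MetricSpace E] (μ : ℝ) (f : ℝ → E) : ℝ :=
  sSup {x : ℝ | ∃ η : ℝ, 0 < η ∧ x = fernEta f η / η ^ μ}

/-- `[f]_{^μ} = sup_{0 < s < u ≤ 1} Δ(f;s,(s+u)/2,u)/(u-s)^μ`. -/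
def midSemi {E : Type*} [MetricSpace E] (μ : ℝ) (f : ℝ → E) : ℝ :=
  sSup {x : ℝ | ∃ s u : ℝ, 0 < s ∧ s < u ∧ u ≤ 1 ∧
    x = tripleDelta f s ((s + u) / 2) u / (u - s) ^ μ}

/-- Membership in `D^μ([0,1],E)`: càdlàg with finite Hölder-type seminorms. -/
def MemDHolder {E : Type*} [MetricSpace E] (μ : ℝ) (f : ℝ → E) : Prop :=
  IsCadlagOn f ∧ BddAbove (holderSet μ f) ∧ BddAbove (leftSet μ f) ∧
    BddAbove (rightSet μ f)

/-- `[[f]]_{μ,p}^p`, the triple-integral quantity. -/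
def tripleIntP {E : Type*} [MetricSpace E] (μ p : ℝ) (f : ℝ → E) : ℝ :=
  ∫ q in {q : ℝ × ℝ × ℝ | 0 ≤ q.1 ∧ q.1 < q.2.1 ∧ q.2.1 < q.2.2 ∧ q.2.2 ≤ 1},
    tripleDelta f q.1 q.2.1 q.2.2 ^ p / (q.2.2 - q.1) ^ (μ * p + 3)

/-- `[[f]]_{μ,p}`. -/
def tripleSemi {E : Type*} [MetricSpace E] (μ p : ℝ) (f : ℝ → E) : ℝ :=
  tripleIntP μ p f ^ (1 / p)

/-- `||f]]_{μ,p}^p`. -/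
def leftIntP {E : Type*} [MetricSpace E] (μ p : ℝ) (f : ℝ → E) : ℝ :=
  ∫ t in (0:ℝ)..1, dist (f 0) (f t) ^ p / t ^ (μ * p + 1)

/-- `||f]]_{μ,p}`. -/
def leftIntSemi {E : Type*} [MetricSpace E] (μ p : ℝ) (f : ℝ → E) : ℝ :=
  leftIntP μ p f ^ (1 / p)

/-- `[[f||_{μ,p}^p`. -/
def rightIntP {E : Type*} [MetricSpace E] (μ p : ℝ) (f : ℝ → E) : ℝ :=
  ∫ t in (0:ℝ)..1, dist (f 1) (f t) ^ p / (1 - t) ^ (μ * p + 1)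

/-- `[[f||_{μ,p}`. -/
def rightIntSemi {E : Type*} [MetricSpace E] (μ p : ℝ) (f : ℝ → E) : ℝ :=
  rightIntP μ p f ^ (1 / p)

/-- The sup over `[0,1]` of the norm of an `ℝ^d`-valued function. -/
def supNorm {k : ℕ} (f : ℝ → EuclideanSpace ℝ (Fin k)) : ℝ :=
  sSup {x : ℝ | ∃ t : ℝ, 0 ≤ t ∧ t ≤ 1 ∧ x = ‖f t‖}

/-- Dyadic projection `π_n`. -/
def dyadicProj (n : ℕ) (t : ℝ) : ℝ :=
  if t = 1 then 1 - 1 / 2 ^ n else (⌊t * 2 ^ n⌋ : ℝ) / 2 ^ n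



/-- Auxiliary: the inner set in Fernique's modulus. -/
def Tset {E : Type*} [MetricSpace E] (f : ℝ → E) (σ τ θ : ℝ) : Set ℝ :=
  {y : ℝ | ∃ s u : ℝ, σ ≤ s ∧ s < θ ∧ θ ≤ u ∧ u ≤ τ ∧
      y = max (dist (f σ) (f s)) (dist (f u) (f τ))}

lemma fernMod_eq {E : Type*} [MetricSpace E] (f : ℝ → E) (σ τ : ℝ) :
    fernMod f σ τ = sInf {x : ℝ | ∃ θ : ℝ, σ < θ ∧ θ ≤ τ ∧ x = sSup (Tset f σ τ θ)} := rfl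

lemma local_bound {E : Type*} [MetricSpace E] (f : ℝ → E) (hf : IsCadlagOn f)
    (x : ℝ) (hx : x ∈ Set.Icc (0:ℝ) 1) :
    ∃ δ > (0:ℝ), ∃ M : ℝ, ∀ s ∈ Set.Icc (0:ℝ) 1, |s - x| < δ → dist (f x) (f s) ≤ M := by
  obtain ⟨δ₁, hδ₁, h₁⟩ : ∃ δ > (0:ℝ), ∀ s ∈ Set.Icc (0:ℝ) 1, x ≤ s → |s - x| < δ →
      dist (f x) (f s) ≤ 1 := by
    rcases eq_or_lt_of_le hx.2 with h1 | h1
    · refine ⟨1, one_pos, fun s hs hxs _ => ?_⟩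
      have : s = x := le_antisymm (h1 ▸ hs.2) hxs
      simp [this]
    · have hc := hf.1 x ⟨hx.1, h1⟩
      rw [ContinuousWithinAt, Metric.tendsto_nhdsWithin_nhds] at hc
      obtain ⟨δ, hδ, h⟩ := hc 1 one_pos
      refine ⟨δ, hδ, fun s _ hxs hd => ?_⟩
      have := h (Set.mem_Ici.2 hxs) (by rwa [Real.dist_eq])
      rw [dist_comm]; exact this.le
  obtain ⟨δ₂, hδ₂, M₂, h₂⟩ : ∃ δ > (0:ℝ), ∃ M : ℝ, ∀ s ∈ Set.Icc (0:ℝ) 1, s < x →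
      |s - x| < δ → dist (f x) (f s) ≤ M := by
    rcases eq_or_lt_of_le hx.1 with h0 | h0
    · exact ⟨1, one_pos, 0, fun s hs hsx _ =>
        absurd (hsx.trans_le h0.ge) (not_lt.2 hs.1)⟩
    · obtain ⟨l, hl⟩ := hf.2 x ⟨h0, hx.2⟩
      rw [Metric.tendsto_nhdsWithin_nhds] at hl
      obtain ⟨δ, hδ, h⟩ := hl 1 one_pos
      refine ⟨δ, hδ, dist (f x) l + 1, fun s _ hsx hd => ?_⟩
      have h' := h (Set.mem_Iio.2 hsx) (by rwa [Real.dist_eq])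
      calc dist (f x) (f s) ≤ dist (f x) l + dist l (f s) := dist_triangle _ _ _
        _ ≤ dist (f x) l + 1 := by rw [dist_comm l]; linarith [h'.le]
  refine ⟨min δ₁ δ₂, lt_min hδ₁ hδ₂, max 1 M₂, fun s hs hd => ?_⟩
  rcases le_or_gt x s with h | h
  · exact le_max_of_le_left (h₁ s hs h (hd.trans_le (min_le_left _ _)))
  · exact le_max_of_le_right (h₂ s hs h (hd.trans_le (min_le_right _ _)))

lemma global_bound {E : Type*} [MetricSpace E] (f : ℝ → E) (hf : IsCadlagOn f) :
    ∃ M : ℝ, ∀ s ∈ Set.Icc (0:ℝ) 1, ∀ t ∈ Set.Icc (0:ℝ) 1, dist (f s) (f t) ≤ M := by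
  choose! δ hδ M hM using fun x (hx : x ∈ Set.Icc (0:ℝ) 1) => local_bound f hf x hx
  obtain ⟨F, hFsub, hFcov⟩ := isCompact_Icc.elim_nhds_subcover
    (fun x => Metric.ball x (δ x)) (fun x hx => Metric.ball_mem_nhds x (hδ x hx))
  have h0mem : (0:ℝ) ∈ Set.Icc (0:ℝ) 1 := ⟨le_refl _, zero_le_one⟩
  have hFne : F.Nonempty := by
    rcases Set.mem_iUnion₂.1 (hFcov h0mem) with ⟨x, hxF, _⟩
    exact ⟨x, hxF⟩
  set C := F.sup' hFne (fun x => dist (f 0) (f x) + M x) with hC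
  have hball : ∀ t ∈ Set.Icc (0:ℝ) 1, dist (f 0) (f t) ≤ C := by
    intro t ht
    rcases Set.mem_iUnion₂.1 (hFcov ht) with ⟨x, hxF, hxt⟩
    have hx1 : x ∈ Set.Icc (0:ℝ) 1 := hFsub x hxF
    have hdt : dist (f x) (f t) ≤ M x := by
      apply hM x hx1 t ht
      have := Metric.mem_ball.1 hxt
      rwa [Real.dist_eq] at this
    calc dist (f 0) (f t) ≤ dist (f 0) (f x) + dist (f x) (f t) := dist_triangle _ _ _
      _ ≤ dist (f 0) (f x) + M x := by linarith
      _ ≤ C := by rw [hC]; exact Finset.le_sup' (fun x => dist (f 0) (f x) + M x) hxF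
  refine ⟨C + C, fun s hs t ht => ?_⟩
  calc dist (f s) (f t) ≤ dist (f 0) (f s) + dist (f 0) (f t) := dist_triangle_left _ _ _
    _ ≤ C + C := add_le_add (hball s hs) (hball t ht)


theorem stmt0 {E : Type*} [MetricSpace E] (f : ℝ → E) (hf : IsCadlagOn f)
    (σ τ : ℝ) (hσ : 0 ≤ σ) (hστ : σ < τ) (hτ : τ ≤ 1) :
    (1 / 2) * fernMod f σ τ ≤ deltaMod f σ τ ∧ deltaMod f σ τ ≤ 2 * fernMod f σ τ := by
  obtain ⟨M, hM⟩ := global_bound f hf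
  have hστle : σ ≤ τ := hστ.le
  have hmem01 : ∀ t, σ ≤ t → t ≤ τ → t ∈ Set.Icc (0:ℝ) 1 :=
    fun t h1 h2 => ⟨hσ.trans h1, h2.trans hτ⟩
  have hdist : ∀ s t, σ ≤ s → s ≤ τ → σ ≤ t → t ≤ τ → dist (f s) (f t) ≤ M :=
    fun s t a b c d' => hM s (hmem01 s a b) t (hmem01 t c d')
  have hSbdd : BddAbove {x : ℝ | ∃ s t u : ℝ, σ ≤ s ∧ s ≤ t ∧ t ≤ u ∧ u ≤ τ ∧
      x = tripleDelta f s t u} := by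
    refine ⟨M, ?_⟩
    rintro x ⟨s, t, u, h1, h2, h3, h4, rfl⟩
    exact le_trans (min_le_left _ _)
      (hdist s t h1 (h2.trans (h3.trans h4)) (h1.trans h2) (h3.trans h4))
  have hS0 : (0:ℝ) ∈ {x : ℝ | ∃ s t u : ℝ, σ ≤ s ∧ s ≤ t ∧ t ≤ u ∧ u ≤ τ ∧
      x = tripleDelta f s t u} :=
    ⟨σ, σ, σ, le_refl _, le_refl _, le_refl _, hστle, by simp [tripleDelta]⟩
  have hΔ0 : 0 ≤ deltaMod f σ τ := le_csSup hSbdd hS0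
  have htriple : ∀ s t u : ℝ, σ ≤ s → s ≤ t → t ≤ u → u ≤ τ →
      min (dist (f s) (f t)) (dist (f t) (f u)) ≤ deltaMod f σ τ :=
    fun s t u h1 h2 h3 h4 => le_csSup hSbdd ⟨s, t, u, h1, h2, h3, h4, rfl⟩
  have hT0 : ∀ θ, σ < θ → θ ≤ τ → (0:ℝ) ∈ Tset f σ τ θ :=
    fun θ h1 h2 => ⟨σ, τ, le_refl _, h1, h2, le_refl _, by simp⟩
  have hTbdd : ∀ θ, σ < θ → θ ≤ τ → BddAbove (Tset f σ τ θ) := by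
    intro θ h1 h2
    refine ⟨M, ?_⟩
    rintro y ⟨s, u, hs1, hs2, hu1, hu2, rfl⟩
    exact max_le (hdist σ s (le_refl _) hστle hs1 (hs2.le.trans h2))
      (hdist u τ ((h1.le.trans hu1)) hu2 hστle (le_refl _))
  have hTsup0 : ∀ θ, σ < θ → θ ≤ τ → 0 ≤ sSup (Tset f σ τ θ) :=
    fun θ h1 h2 => le_csSup (hTbdd θ h1 h2) (hT0 θ h1 h2)
  have hIbdd : BddBelow {x : ℝ | ∃ θ : ℝ, σ < θ ∧ θ ≤ τ ∧ x = sSup (Tset f σ τ θ)} := by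
    refine ⟨0, ?_⟩
    rintro x ⟨θ, h1, h2, rfl⟩
    exact hTsup0 θ h1 h2
  have hIne : Set.Nonempty {x : ℝ | ∃ θ : ℝ, σ < θ ∧ θ ≤ τ ∧ x = sSup (Tset f σ τ θ)} :=
    ⟨sSup (Tset f σ τ τ), τ, hστ, le_refl _, rfl⟩
  -- Direction Δ ≤ 2N
  have hΔ2N : deltaMod f σ τ ≤ 2 * fernMod f σ τ := by
    have key : ∀ θ, σ < θ → θ ≤ τ → deltaMod f σ τ ≤ 2 * sSup (Tset f σ τ θ) := by
      intro θ hθ1 hθ2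
      have hb := hTbdd θ hθ1 hθ2
      have hsup0 := hTsup0 θ hθ1 hθ2
      unfold deltaMod
      apply Real.sSup_le _ (by linarith)
      rintro x ⟨s, t, u, h1, h2, h3, h4, rfl⟩
      unfold tripleDelta
      rcases lt_or_ge t θ with h | h
      · have e1 : dist (f σ) (f s) ≤ sSup (Tset f σ τ θ) :=
          le_trans (le_max_left _ _)
            (le_csSup hb ⟨s, τ, h1, h2.trans_lt h, hθ2, le_refl _, rfl⟩)
        have e2 : dist (f σ) (f t) ≤ sSup (Tset f σ τ θ) :=
          le_trans (le_max_left _ _)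
            (le_csSup hb ⟨t, τ, h1.trans h2, h, hθ2, le_refl _, rfl⟩)
        calc min (dist (f s) (f t)) (dist (f t) (f u)) ≤ dist (f s) (f t) := min_le_left _ _
          _ ≤ dist (f σ) (f s) + dist (f σ) (f t) := dist_triangle_left _ _ _
          _ ≤ 2 * sSup (Tset f σ τ θ) := by linarith
      · have e1 : dist (f t) (f τ) ≤ sSup (Tset f σ τ θ) :=
          le_trans (le_max_right _ _)
            (le_csSup hb ⟨σ, t, le_refl _, hθ1, h, h3.trans h4, rfl⟩)
        have e2 : dist (f u) (f τ) ≤ sSup (Tset f σ τ θ) :=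
          le_trans (le_max_right _ _)
            (le_csSup hb ⟨σ, u, le_refl _, hθ1, h.trans h3, h4, rfl⟩)
        calc min (dist (f s) (f t)) (dist (f t) (f u)) ≤ dist (f t) (f u) := min_le_right _ _
          _ ≤ dist (f t) (f τ) + dist (f u) (f τ) := dist_triangle_right _ _ _
          _ ≤ 2 * sSup (Tset f σ τ θ) := by linarith
    rw [fernMod_eq]
    have h2 : deltaMod f σ τ / 2 ≤
        sInf {x : ℝ | ∃ θ : ℝ, σ < θ ∧ θ ≤ τ ∧ x = sSup (Tset f σ τ θ)} := by
      apply le_csInf hIne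
      rintro b ⟨θ, h1, h2, rfl⟩
      linarith [key θ h1 h2]
    linarith
  -- Direction N ≤ 2Δ
  have hN2Δ : fernMod f σ τ ≤ 2 * deltaMod f σ τ := by
    apply le_of_forall_pos_le_add
    intro ε hε
    set A : Set ℝ := {t | t ∈ Set.Icc σ τ ∧ dist (f σ) (f t) ≤ deltaMod f σ τ} with hA
    have hσA : σ ∈ A := ⟨⟨le_refl σ, hστle⟩, by simpa using hΔ0⟩
    have hAbdd : BddAbove A := ⟨τ, fun t ht => ht.1.2⟩
    set θ₀ := sSup A with hθ₀def
    have hθ₀1 : σ ≤ θ₀ := le_csSup hAbdd hσA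
    have hθ₀2 : θ₀ ≤ τ := csSup_le ⟨σ, hσA⟩ (fun t ht => ht.1.2)
    have key1 : ∀ s, σ ≤ s → s < θ₀ → dist (f σ) (f s) ≤ 2 * deltaMod f σ τ := by
      intro s h1 h2
      obtain ⟨u, huA, hsu⟩ := exists_lt_of_lt_csSup ⟨σ, hσA⟩ h2
      have h3 := htriple σ s u (le_refl σ) h1 hsu.le huA.1.2
      rcases min_le_iff.1 h3 with h | h
      · linarith
      · have := dist_triangle_right (f σ) (f s) (f u)
        have hh := huA.2
        linarith
    have key2 : ∀ u, θ₀ < u → u ≤ τ → dist (f u) (f τ) ≤ deltaMod f σ τ := by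
      intro u h1 h2
      have huσ : σ ≤ u := hθ₀1.trans h1.le
      have hnA : u ∉ A := fun h => absurd (le_csSup hAbdd h) (not_le.2 h1)
      have hgt : ¬ dist (f σ) (f u) ≤ deltaMod f σ τ := fun hd => hnA ⟨⟨huσ, h2⟩, hd⟩
      have h3 := htriple σ u τ (le_refl σ) huσ h2 (le_refl τ)
      rcases min_le_iff.1 h3 with h | h
      · exact absurd h hgt
      · exact h
    have main : ∃ θ, σ < θ ∧ θ ≤ τ ∧ ∀ y ∈ Tset f σ τ θ, y ≤ 2 * deltaMod f σ τ + ε := by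
      rcases eq_or_lt_of_le hθ₀2 with heq | hlt
      · refine ⟨τ, hστ, le_refl τ, ?_⟩
        rintro y ⟨s, u, h1, h2, h3, h4, rfl⟩
        have hu : u = τ := le_antisymm h4 h3
        have hs : dist (f σ) (f s) ≤ 2 * deltaMod f σ τ := key1 s h1 (h2.trans_le heq.ge)
        apply max_le (by linarith)
        rw [hu]
        simp
        linarith
      · have hc := hf.1 θ₀ ⟨hσ.trans hθ₀1, lt_of_lt_of_le hlt hτ⟩
        rw [ContinuousWithinAt, Metric.tendsto_nhdsWithin_nhds] at hc
        obtain ⟨δ, hδ, hcd⟩ := hc ε hε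
        rcases eq_or_lt_of_le hθ₀1 with heq | hθ₀σ
        · -- θ₀ = σ
          refine ⟨min (σ + δ) τ, lt_min (by linarith) hστ, min_le_right _ _, ?_⟩
          rintro y ⟨s, u, h1, h2, h3, h4, rfl⟩
          have hsδ : dist (f s) (f θ₀) < ε := by
            apply hcd (Set.mem_Ici.2 (heq ▸ h1))
            rw [Real.dist_eq, abs_lt]
            have h2' : s < σ + δ := h2.trans_le (min_le_left _ _)
            constructor <;> [linarith [heq ▸ h1]; skip]
            rw [← heq]; linarith
          have hs : dist (f σ) (f s) < ε := by
            rw [dist_comm, heq]; exact hsδ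
          have hθu : θ₀ < u := lt_of_lt_of_le
            (show θ₀ < min (σ + δ) τ by rw [← heq]; exact lt_min (by linarith) hστ) h3
          have hu := key2 u hθu h4
          exact max_le (by linarith) (by linarith)
        · -- σ < θ₀
          refine ⟨θ₀, hθ₀σ, hθ₀2, ?_⟩
          rintro y ⟨s, u, h1, h2, h3, h4, rfl⟩
          have hs := key1 s h1 h2
          have hu : dist (f u) (f τ) ≤ 2 * deltaMod f σ τ + ε := by
            rcases eq_or_lt_of_le h3 with hequ | hltu
            · have hw1 : θ₀ < min (θ₀ + δ / 2) τ := lt_min (by linarith) hlt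
              have hw2 : min (θ₀ + δ / 2) τ ≤ τ := min_le_right _ _
              have hwd : dist (f (min (θ₀ + δ / 2) τ)) (f θ₀) < ε := by
                apply hcd (Set.mem_Ici.2 hw1.le)
                rw [Real.dist_eq, abs_lt]
                have := min_le_left (θ₀ + δ / 2) τ
                constructor <;> linarith
              have hwτ := key2 _ hw1 hw2
              calc dist (f u) (f τ) = dist (f θ₀) (f τ) := by rw [← hequ]
                _ ≤ dist (f θ₀) (f (min (θ₀ + δ / 2) τ)) + dist (f (min (θ₀ + δ / 2) τ)) (f τ) :=
                    dist_triangle _ _ _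
                _ ≤ 2 * deltaMod f σ τ + ε := by
                    rw [dist_comm (f θ₀)]; linarith
            · linarith [key2 u hltu h4]
          exact max_le (by linarith) hu
    obtain ⟨θ, h1, h2, h3⟩ := main
    have hsup : sSup (Tset f σ τ θ) ≤ 2 * deltaMod f σ τ + ε :=
      Real.sSup_le h3 (by linarith)
    have hle : fernMod f σ τ ≤ sSup (Tset f σ τ θ) := by
      rw [fernMod_eq]
      exact csInf_le hIbdd ⟨θ, h1, h2, rfl⟩
    linarith
  exact ⟨by linarith, hΔ2N⟩
end
end

section
/- For any càdlàg function f : [0,1] → E and every triplet 0 ≤ σ < t < τ ≤ 1, N(f;(σ,τ)) ≤ N(f;(σ,t)) ∨ N(f;(t,τ)) + Δ(f;σ,t,τ), where Δ(f;σ,t,τ) = d(f(σ),f(t)) ∧ d(f(t),f(τ)). -/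
open MeasureTheory Set Filter

noncomputable section

/-- The inner set appearing in the definition of `fernMod`. -/
def innerSet {E : Type*} [MetricSpace E] (f : ℝ → E) (σ τ θ : ℝ) : Set ℝ :=
  {y : ℝ | ∃ s u : ℝ, σ ≤ s ∧ s < θ ∧ θ ≤ u ∧ u ≤ τ ∧
    y = max (dist (f σ) (f s)) (dist (f u) (f τ))}

lemma cadlag_bdd {E : Type*} [MetricSpace E] (f : ℝ → E) (hf : IsCadlagOn f) :
    ∃ C : ℝ, ∀ x ∈ Set.Icc (0:ℝ) 1, dist (f x) (f 0) ≤ C := by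
  refine isCompact_Icc.induction_on (p := fun s => ∃ C, ∀ x ∈ s, dist (f x) (f 0) ≤ C)
    ⟨0, by simp⟩ ?_ ?_ ?_
  · rintro s t hst ⟨C, hC⟩; exact ⟨C, fun x hx => hC x (hst hx)⟩
  · rintro s t ⟨C, hC⟩ ⟨D, hD⟩
    refine ⟨max C D, ?_⟩
    rintro x (hx | hx)
    exacts [(hC x hx).trans (le_max_left _ _), (hD x hx).trans (le_max_right _ _)]
  · intro x hx
    by_cases hx1 : x < 1
    · have hR : {y | dist (f y) (f x) < 1} ∈ nhdsWithin x (Set.Ici x) :=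
        Metric.tendsto_nhds.mp (hf.1 x ⟨hx.1, hx1⟩) 1 one_pos
      by_cases hx0 : 0 < x
      · obtain ⟨l, hl⟩ := hf.2 x ⟨hx0, hx.2⟩
        have hW : {y | dist (f y) l < 1} ∈ nhdsWithin x (Set.Iio x) :=
          Metric.tendsto_nhds.mp hl 1 one_pos
        refine ⟨{y | dist (f y) (f x) < 1} ∪ {y | dist (f y) l < 1}, ?_, ?_⟩
        · apply nhdsWithin_le_nhds
          have h : nhds x = nhdsWithin x (Set.Iio x ∪ Set.Ici x) := by
            rw [Set.Iio_union_Ici, nhdsWithin_univ]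
          rw [h, nhdsWithin_union, Filter.mem_sup]
          exact ⟨Filter.mem_of_superset hW Set.subset_union_right,
                 Filter.mem_of_superset hR Set.subset_union_left⟩
        · refine ⟨max (1 + dist (f x) (f 0)) (1 + dist l (f 0)), ?_⟩
          rintro y (hy | hy)
          · refine le_max_of_le_left ?_
            have h := dist_triangle (f y) (f x) (f 0)
            simp only [Set.mem_setOf_eq] at hy
            linarith
          · refine le_max_of_le_right ?_
            have h := dist_triangle (f y) l (f 0)
            simp only [Set.mem_setOf_eq] at hy
            linarith
      · have hx0' : x = 0 := le_antisymm (not_lt.mp hx0) hx.1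
        refine ⟨{y | dist (f y) (f x) < 1}, ?_, ⟨1 + dist (f x) (f 0), ?_⟩⟩
        · refine nhdsWithin_mono x ?_ hR
          intro y hy; simpa [hx0'] using hy.1
        · intro y hy
          have h := dist_triangle (f y) (f x) (f 0)
          simp only [Set.mem_setOf_eq] at hy
          linarith
    · have hx1' : x = 1 := le_antisymm hx.2 (not_lt.mp hx1)
      have hx0 : 0 < x := by rw [hx1']; norm_num
      obtain ⟨l, hl⟩ := hf.2 x ⟨hx0, hx.2⟩
      have hW : {y | dist (f y) l < 1} ∈ nhdsWithin x (Set.Iio x) :=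
        Metric.tendsto_nhds.mp hl 1 one_pos
      refine ⟨{y | dist (f y) l < 1} ∪ {x}, ?_, ?_⟩
      · have hsub : Set.Icc (0:ℝ) 1 ⊆ Set.Iic x := by
          intro y hy; rw [hx1']; exact hy.2
        refine nhdsWithin_mono x hsub ?_
        have h : Set.Iic x = Set.Iio x ∪ {x} := Set.Iio_union_right.symm
        rw [h, nhdsWithin_union, Filter.mem_sup]
        constructor
        · exact Filter.mem_of_superset hW Set.subset_union_left
        · rw [nhdsWithin_singleton, Filter.mem_pure]
          exact Or.inr rfl
      · refine ⟨max (1 + dist l (f 0)) (dist (f x) (f 0)), ?_⟩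
        rintro y (hy | hy)
        · refine le_max_of_le_left ?_
          have h := dist_triangle (f y) l (f 0)
          simp only [Set.mem_setOf_eq] at hy
          linarith
        · rcases hy with rfl
          exact le_max_of_le_right le_rfl

theorem stmt2 {E : Type*} [MetricSpace E] (f : ℝ → E) (hf : IsCadlagOn f)
    (σ t τ : ℝ) (hσ : 0 ≤ σ) (hσt : σ < t) (htτ : t < τ) (hτ : τ ≤ 1) :
    fernMod f σ τ ≤ max (fernMod f σ t) (fernMod f t τ) + tripleDelta f σ t τ := by
  obtain ⟨C, hC⟩ := cadlag_bdd f hf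
  have hd : ∀ a b : ℝ, 0 ≤ a → a ≤ 1 → 0 ≤ b → b ≤ 1 → dist (f a) (f b) ≤ 2 * C := by
    intro a b ha ha' hb hb'
    calc dist (f a) (f b) ≤ dist (f a) (f 0) + dist (f b) (f 0) := dist_triangle_right _ _ _
      _ ≤ C + C := add_le_add (hC a ⟨ha, ha'⟩) (hC b ⟨hb, hb'⟩)
      _ = 2 * C := by ring
  have ht0 : 0 ≤ t := hσ.trans hσt.le
  have ht1 : t ≤ 1 := htτ.le.trans hτ
  -- boundedness of inner sets
  have hbdd : ∀ a b θ : ℝ, 0 ≤ a → b ≤ 1 → θ ≤ b → BddAbove (innerSet f a b θ) := by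
    intro a b θ ha hb hθ
    refine ⟨2 * C, ?_⟩
    rintro y ⟨s, u, h1, h2, h3, h4, rfl⟩
    have hs0 : 0 ≤ s := ha.trans h1
    have hs1 : s ≤ 1 := (h2.le.trans hθ).trans hb
    have hu0 : 0 ≤ u := hs0.trans (h2.le.trans h3)
    have hu1 : u ≤ 1 := h4.trans hb
    exact max_le (hd a s ha (h1.trans hs1) hs0 hs1) (hd u b hu0 hu1 (hu0.trans h4) hb)
  -- key upper bound for elements of inner sets
  have hle : ∀ a b θ s u : ℝ, 0 ≤ a → b ≤ 1 → θ ≤ b → a ≤ s → s < θ → θ ≤ u → u ≤ b →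
      max (dist (f a) (f s)) (dist (f u) (f b)) ≤ sSup (innerSet f a b θ) := by
    intro a b θ s u ha hb hθ h1 h2 h3 h4
    exact le_csSup (hbdd a b θ ha hb hθ) ⟨s, u, h1, h2, h3, h4, rfl⟩
  have h0sup : ∀ a b θ : ℝ, 0 ≤ sSup (innerSet f a b θ) := by
    intro a b θ
    apply Real.sSup_nonneg
    rintro y ⟨s, u, _, _, _, _, rfl⟩
    exact le_max_of_le_left dist_nonneg
  set S0 : Set ℝ := {x : ℝ | ∃ θ : ℝ, σ < θ ∧ θ ≤ τ ∧ x = sSup (innerSet f σ τ θ)} with hS0def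
  set S1 : Set ℝ := {x : ℝ | ∃ θ : ℝ, σ < θ ∧ θ ≤ t ∧ x = sSup (innerSet f σ t θ)} with hS1def
  set S2 : Set ℝ := {x : ℝ | ∃ θ : ℝ, t < θ ∧ θ ≤ τ ∧ x = sSup (innerSet f t τ θ)} with hS2def
  have e0 : fernMod f σ τ = sInf S0 := rfl
  have e1 : fernMod f σ t = sInf S1 := rfl
  have e2 : fernMod f t τ = sInf S2 := rfl
  have hS1ne : S1.Nonempty := ⟨_, t, hσt, le_rfl, rfl⟩
  have hS2ne : S2.Nonempty := ⟨_, τ, htτ, le_rfl, rfl⟩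
  have hS0bb : BddBelow S0 := by
    refine ⟨0, ?_⟩
    rintro x ⟨θ, _, _, rfl⟩
    exact h0sup _ _ _
  have hnn1 : 0 ≤ sInf S1 := by
    apply Real.sInf_nonneg
    rintro x ⟨θ, _, _, rfl⟩
    exact h0sup _ _ _
  rw [e0, e1, e2]
  refine le_of_forall_pos_le_add ?_
  intro ε hε
  obtain ⟨x1, hx1mem, hx1lt⟩ := Real.lt_sInf_add_pos hS1ne hε
  obtain ⟨θ1, hθ1a, hθ1b, rfl⟩ := hx1mem
  obtain ⟨x2, hx2mem, hx2lt⟩ := Real.lt_sInf_add_pos hS2ne hε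
  obtain ⟨θ2, hθ2a, hθ2b, rfl⟩ := hx2mem
  have hmax1 : sInf S1 ≤ max (sInf S1) (sInf S2) := le_max_left _ _
  have hmax2 : sInf S2 ≤ max (sInf S1) (sInf S2) := le_max_right _ _
  have hd1 : (0:ℝ) ≤ dist (f σ) (f t) := dist_nonneg
  have hd2 : (0:ℝ) ≤ dist (f t) (f τ) := dist_nonneg
  rcases le_total (dist (f σ) (f t)) (dist (f t) (f τ)) with hcase | hcase
  · -- Δ = d(fσ,ft); use θ2
    have hΔ : tripleDelta f σ t τ = dist (f σ) (f t) := min_eq_left hcase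
    have hmemS0 : sSup (innerSet f σ τ θ2) ∈ S0 :=
      ⟨θ2, hσt.trans hθ2a, hθ2b, rfl⟩
    refine le_trans (csInf_le hS0bb hmemS0) ?_
    rw [hΔ]
    refine Real.sSup_le ?_ (by linarith)
    rintro y ⟨s, u, h1, h2, h3, h4, rfl⟩
    refine max_le ?_ ?_
    · -- bound dist (f σ) (f s)
      rcases lt_or_ge s θ1 with hs | hs
      · have := (le_max_left _ _).trans
          (hle σ t θ1 s t hσ ht1 hθ1b h1 hs hθ1b le_rfl)
        linarith
      · rcases le_or_gt s t with hst | hst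
        · have h5 := (le_max_right _ _).trans
            (hle σ t θ1 σ s hσ ht1 hθ1b le_rfl hθ1a hs hst)
          have htri := dist_triangle (f σ) (f t) (f s)
          rw [dist_comm (f t) (f s)] at htri
          linarith
        · have h5 := (le_max_left _ _).trans
            (hle t τ θ2 s τ ht0 hτ hθ2b hst.le h2 hθ2b le_rfl)
          have htri := dist_triangle (f σ) (f t) (f s)
          linarith
    · -- bound dist (f u) (f τ)
      have := (le_max_right _ _).trans
        (hle t τ θ2 t u ht0 hτ hθ2b le_rfl hθ2a h3 h4)
      linarith
  · -- Δ = d(ft,fτ); use θ1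
    have hΔ : tripleDelta f σ t τ = dist (f t) (f τ) := min_eq_right hcase
    have hmemS0 : sSup (innerSet f σ τ θ1) ∈ S0 :=
      ⟨θ1, hθ1a, hθ1b.trans htτ.le, rfl⟩
    refine le_trans (csInf_le hS0bb hmemS0) ?_
    rw [hΔ]
    refine Real.sSup_le ?_ (by linarith)
    rintro y ⟨s, u, h1, h2, h3, h4, rfl⟩
    refine max_le ?_ ?_
    · have := (le_max_left _ _).trans
        (hle σ t θ1 s t hσ ht1 hθ1b h1 h2 hθ1b le_rfl)
      linarith
    · rcases le_or_gt θ2 u with hu | hu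
      · have := (le_max_right _ _).trans
          (hle t τ θ2 t u ht0 hτ hθ2b le_rfl hθ2a hu h4)
        linarith
      · rcases le_or_gt u t with hut | hut
        · have h5 := (le_max_right _ _).trans
            (hle σ t θ1 σ u hσ ht1 hθ1b le_rfl hθ1a h3 hut)
          have htri := dist_triangle (f u) (f t) (f τ)
          linarith
        · have h5 := (le_max_left _ _).trans
            (hle t τ θ2 u τ ht0 hτ hθ2b hut.le hu hθ2b le_rfl)
          have htri := dist_triangle (f u) (f t) (f τ)
          rw [dist_comm (f u) (f t)] at htri
          linarith
end
end

section
/- Let μ ∈ (0,1). For any f ∈ D^μ([0,1],E), the Hölder-type seminorms [f]_μ = sup_{0≤s≤t≤u≤1} Δ(f;s,t,u)/(u-s)^μ and [f]_{~μ} = sup_{η>0} N(f;η)/η^μ are equivalent: (1/2)[f]_{~μ} ≤ [f]_μ ≤ 2[f]_{~μ}. -/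
open MeasureTheory Set Filter

noncomputable section

theorem stmt3 {E : Type*} [MetricSpace E] (μ : ℝ) (hμ : μ ∈ Set.Ioo (0:ℝ) 1)
    (f : ℝ → E) (hf : MemDHolder μ f) :
    (1 / 2) * tildeSemi μ f ≤ holderSemi μ f ∧ holderSemi μ f ≤ 2 * tildeSemi μ f := by
  obtain ⟨hcad, hbH, hbL, hbR⟩ := hf
  obtain ⟨hμ0, hμ1⟩ := hμ
  have hμne : μ ≠ 0 := ne_of_gt hμ0
  -- H ≥ 0
  have h0mem : (0:ℝ) ∈ holderSet μ f :=
    ⟨0, 0, 0, le_refl _, le_refl _, le_refl _, zero_le_one, by simp [tripleDelta]⟩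
  have hH0 : 0 ≤ holderSemi μ f := le_csSup hbH h0mem
  -- triple delta bound
  have htd : ∀ s t u : ℝ, 0 ≤ s → s ≤ t → t ≤ u → u ≤ 1 →
      tripleDelta f s t u ≤ holderSemi μ f * (u - s) ^ μ := by
    intro s t u hs hst htu hu
    rcases eq_or_lt_of_le (hst.trans htu) with h | h
    · have ht : t = s := le_antisymm (by rw [h]; exact htu) hst
      rw [ht, ← h]
      simp [tripleDelta]
      positivity
    · have hpow : 0 < (u - s) ^ μ := Real.rpow_pos_of_pos (by linarith) μ
      have hx : tripleDelta f s t u / (u - s) ^ μ ∈ holderSet μ f :=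
        ⟨s, t, u, hs, hst, htu, hu, rfl⟩
      have h2 := le_csSup hbH hx
      rw [div_le_iff₀ hpow] at h2
      exact h2
  -- global distance bound
  obtain ⟨C, hCb⟩ := hbL
  have hC1 : dist (f 0) (f 1) / (1:ℝ) ^ μ ∈ leftSet μ f := ⟨1, one_pos, le_rfl, rfl⟩
  have hC0 : 0 ≤ C := le_trans (by positivity) (hCb hC1)
  have hdist0 : ∀ t : ℝ, 0 ≤ t → t ≤ 1 → dist (f 0) (f t) ≤ C := by
    intro t h0 h1
    rcases eq_or_lt_of_le h0 with h | h
    · rw [← h]; simpa using hC0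
    · have hx : dist (f 0) (f t) / t ^ μ ∈ leftSet μ f := ⟨t, h, h1, rfl⟩
      have h2 := hCb hx
      have hpow : 0 < t ^ μ := Real.rpow_pos_of_pos h μ
      rw [div_le_iff₀ hpow] at h2
      have h3 : t ^ μ ≤ 1 := Real.rpow_le_one h0 h1 hμ0.le
      nlinarith
  have hM : ∀ a b : ℝ, 0 ≤ a → a ≤ 1 → 0 ≤ b → b ≤ 1 → dist (f a) (f b) ≤ 2 * C := by
    intro a b ha0 ha1 hb0 hb1
    calc dist (f a) (f b) ≤ dist (f a) (f 0) + dist (f 0) (f b) := dist_triangle _ _ _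
    _ ≤ 2 * C := by
        rw [dist_comm (f a) (f 0)]
        linarith [hdist0 a ha0 ha1, hdist0 b hb0 hb1]
  -- bddAbove of the inner sets
  have hSbdd : ∀ σ τ θ : ℝ, 0 ≤ σ → τ ≤ 1 →
      BddAbove {y : ℝ | ∃ s u : ℝ, σ ≤ s ∧ s < θ ∧ θ ≤ u ∧ u ≤ τ ∧
        y = max (dist (f σ) (f s)) (dist (f u) (f τ))} := by
    intro σ τ θ h1 h2
    refine ⟨2 * C, ?_⟩
    rintro y ⟨s, u, hs1, hs2, hs3, hs4, rfl⟩
    have hsu : s ≤ u := le_trans hs2.le hs3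
    have hs0 : 0 ≤ s := h1.trans hs1
    have hsle : s ≤ 1 := (hsu.trans hs4).trans h2
    have hu0 : 0 ≤ u := hs0.trans hsu
    have hule : u ≤ 1 := hs4.trans h2
    exact max_le (hM σ s h1 (by linarith) hs0 hsle) (hM u τ hu0 hule (by linarith) h2)
  -- fernMod ≤ sSup S_θ
  have hfm_le : ∀ σ τ θ : ℝ, σ < θ → θ ≤ τ →
      fernMod f σ τ ≤ sSup {y : ℝ | ∃ s u : ℝ, σ ≤ s ∧ s < θ ∧ θ ≤ u ∧ u ≤ τ ∧
        y = max (dist (f σ) (f s)) (dist (f u) (f τ))} := by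
    intro σ τ θ h1 h2
    apply csInf_le
    · refine ⟨0, ?_⟩
      rintro x ⟨θ', _, _, rfl⟩
      exact Real.sSup_nonneg (by
        rintro y ⟨s, u, _, _, _, _, rfl⟩
        exact le_trans dist_nonneg (le_max_left _ _))
    · exact ⟨θ, h1, h2, rfl⟩
  -- KEY LEMMA: fernMod ≤ 2 H (τ-σ)^μ
  have hNle : ∀ σ τ : ℝ, 0 ≤ σ → σ < τ → τ ≤ 1 →
      fernMod f σ τ ≤ 2 * (holderSemi μ f * (τ - σ) ^ μ) := by
    intro σ τ hσ0 hστ hτ1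
    set D := holderSemi μ f * (τ - σ) ^ μ with hDdef
    have hD0 : 0 ≤ D := mul_nonneg hH0 (Real.rpow_nonneg (by linarith) μ)
    have hDtri : ∀ s t u : ℝ, σ ≤ s → s ≤ t → t ≤ u → u ≤ τ → tripleDelta f s t u ≤ D := by
      intro s t u h1 h2 h3 h4
      refine le_trans (htd s t u (hσ0.trans h1) h2 h3 (h4.trans hτ1)) ?_
      have := Real.rpow_le_rpow (by linarith : (0:ℝ) ≤ u - s) (by linarith : u - s ≤ τ - σ) hμ0.le
      exact mul_le_mul_of_nonneg_left this hH0
    refine le_of_forall_pos_le_add ?_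
    intro ε hε
    set A : Set ℝ := {t | t ∈ Set.Ioc σ τ ∧ D + ε < dist (f σ) (f t)} with hAdef
    have hAsub : ∀ t ∈ A, σ < t ∧ t ≤ τ ∧ D + ε < dist (f σ) (f t) :=
      fun t ht => ⟨ht.1.1, ht.1.2, ht.2⟩
    by_cases hAne : A.Nonempty
    · set θ₀ := sInf A with hθ₀def
      have hbdd : BddBelow A := ⟨σ, fun t ht => (hAsub t ht).1.le⟩
      obtain ⟨t₁, ht₁⟩ := hAne
      have hθτ : θ₀ ≤ τ := (csInf_le hbdd ht₁).trans (hAsub t₁ ht₁).2.1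
      have hσθ₀ : σ ≤ θ₀ := le_csInf ⟨t₁, ht₁⟩ fun t ht => (hAsub t ht).1.le
      -- θ₀ > σ via right continuity at σ
      have hrc := hcad.1 σ ⟨hσ0, lt_of_lt_of_le hστ hτ1⟩
      rw [Metric.continuousWithinAt_iff] at hrc
      obtain ⟨δ, hδ0, hδ⟩ := hrc ε hε
      have hθσ : σ < θ₀ := by
        have hlb : ∀ t ∈ A, σ + δ ≤ t := by
          intro t ht
          by_contra hcon
          push_neg at hcon
          have h1 : σ < t := (hAsub t ht).1
          have h2 : dist t σ < δ := by
            rw [Real.dist_eq, abs_of_nonneg (by linarith)]; linarith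
          have h3 := hδ (Set.mem_Ici.mpr h1.le) h2
          rw [dist_comm] at h3
          have h4 := (hAsub t ht).2.2
          linarith
        linarith [le_csInf ⟨t₁, ht₁⟩ hlb]
      -- key distance lower bound at θ₀
      have hkey : D + ε ≤ dist (f σ) (f θ₀) := by
        by_cases hmem : θ₀ ∈ A
        · exact (hAsub θ₀ hmem).2.2.le
        · have hθ1 : θ₀ < 1 := by
            rcases lt_or_eq_of_le (hθτ.trans hτ1) with h | h
            · exact h
            · exfalso
              apply hmem
              have h1 : θ₀ ≤ t₁ := csInf_le hbdd ht₁
              have h2 : t₁ ≤ θ₀ := by rw [h]; exact (hAsub t₁ ht₁).2.1.trans hτ1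
              rwa [le_antisymm h2 h1] at ht₁
          by_contra hcon
          push_neg at hcon
          have hrc2 := hcad.1 θ₀ ⟨hσ0.trans hσθ₀, hθ1⟩
          rw [Metric.continuousWithinAt_iff] at hrc2
          obtain ⟨δ', hδ'0, hδ'⟩ := hrc2 (D + ε - dist (f σ) (f θ₀)) (by linarith)
          obtain ⟨t, htA, htlt⟩ := exists_lt_of_csInf_lt ⟨t₁, ht₁⟩
            (by linarith : sInf A < θ₀ + δ')
          have h1 : θ₀ ≤ t := csInf_le hbdd htA
          have h2 : dist t θ₀ < δ' := by
            rw [Real.dist_eq, abs_of_nonneg (by linarith)]; linarith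
          have h3 := hδ' (Set.mem_Ici.mpr h1) h2
          have h4 := (hAsub t htA).2.2
          have h5 := dist_triangle (f σ) (f θ₀) (f t)
          have h6 := dist_comm (f t) (f θ₀)
          linarith
      -- for u ∈ [θ₀, τ]
      have hub : ∀ u : ℝ, θ₀ ≤ u → u ≤ τ → dist (f θ₀) (f u) ≤ D := by
        intro u h1 h2
        have h3 := hDtri σ θ₀ u le_rfl hσθ₀ h1 h2
        rcases min_le_iff.mp h3 with h | h
        · linarith
        · exact h
      have huτ : ∀ u : ℝ, θ₀ ≤ u → u ≤ τ → dist (f u) (f τ) ≤ 2 * D := by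
        intro u h1 h2
        have ha := hub u h1 h2
        have hb := hub τ hθτ le_rfl
        have h5 := dist_triangle (f u) (f θ₀) (f τ)
        have h6 := dist_comm (f θ₀) (f u)
        linarith
      refine (hfm_le σ τ θ₀ hθσ hθτ).trans ?_
      apply Real.sSup_le _ (by linarith)
      rintro y ⟨s, u, h1, h2, h3, h4, rfl⟩
      apply max_le
      · rcases eq_or_lt_of_le h1 with h | h
        · simp only [← h, dist_self]; linarith
        · by_contra hcon
          push_neg at hcon
          have hsA : s ∈ A := ⟨⟨h, (h2.le.trans hθτ)⟩, by linarith⟩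
          have := csInf_le hbdd hsA
          linarith
      · linarith [huτ u h3 h4]
    · refine (hfm_le σ τ τ hστ le_rfl).trans ?_
      apply Real.sSup_le _ (by linarith)
      rintro y ⟨s, u, h1, h2, h3, h4, rfl⟩
      have hu : u = τ := le_antisymm h4 h3
      apply max_le
      · rcases eq_or_lt_of_le h1 with h | h
        · simp only [← h, dist_self]; linarith
        · by_contra hcon
          push_neg at hcon
          exact hAne ⟨s, ⟨h, h2.le⟩, by linarith⟩
      · rw [hu, dist_self]; linarith
  -- fernEta bound
  have hfe : ∀ η : ℝ, 0 < η → fernEta f η ≤ 2 * holderSemi μ f * η ^ μ := by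
    intro η hη
    have hηpow : 0 ≤ η ^ μ := Real.rpow_nonneg hη.le μ
    apply Real.sSup_le _ (by positivity)
    rintro x ⟨σ, τ, h1, h2, h3, h4, rfl⟩
    refine (hNle σ τ h1 h2 h3).trans ?_
    have h5 : (τ - σ) ^ μ ≤ η ^ μ := Real.rpow_le_rpow (by linarith) h4 hμ0.le
    have h6 := mul_le_mul_of_nonneg_left h5 hH0
    linarith
  have hT2H : tildeSemi μ f ≤ 2 * holderSemi μ f := by
    apply Real.sSup_le _ (by linarith)
    rintro x ⟨η, hη, rfl⟩
    rw [div_le_iff₀ (Real.rpow_pos_of_pos hη μ)]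
    exact hfe η hη
  -- second direction
  have hfern_nonneg : ∀ σ τ : ℝ, σ < τ → 0 ≤ fernMod f σ τ := by
    intro σ τ h
    apply le_csInf
    case h₁ => exact ⟨_, τ, h, le_rfl, rfl⟩
    rintro b ⟨θ, hθ1, hθ2, rfl⟩
    exact Real.sSup_nonneg (by
      rintro y ⟨s, u, _, _, _, _, rfl⟩
      exact le_trans dist_nonneg (le_max_left _ _))
  have hfeta_nonneg : ∀ η : ℝ, 0 ≤ fernEta f η := by
    intro η
    exact Real.sSup_nonneg (by rintro x ⟨σ, τ, _, h2, _, _, rfl⟩; exact hfern_nonneg σ τ h2)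
  have hTset_bdd : BddAbove {x : ℝ | ∃ η : ℝ, 0 < η ∧ x = fernEta f η / η ^ μ} := by
    refine ⟨2 * holderSemi μ f, ?_⟩
    rintro x ⟨η, hη, rfl⟩
    rw [div_le_iff₀ (Real.rpow_pos_of_pos hη μ)]
    exact hfe η hη
  have hT0 : 0 ≤ tildeSemi μ f := by
    refine le_trans ?_ (le_csSup hTset_bdd ⟨1, one_pos, rfl⟩)
    have := hfeta_nonneg 1
    positivity
  have hFetaBdd : ∀ η : ℝ, 0 < η → BddAbove
      {x : ℝ | ∃ σ τ : ℝ, 0 ≤ σ ∧ σ < τ ∧ τ ≤ 1 ∧ τ - σ ≤ η ∧ x = fernMod f σ τ} := by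
    intro η hη
    refine ⟨2 * holderSemi μ f * η ^ μ, ?_⟩
    rintro x ⟨σ, τ, h1, h2, h3, h4, rfl⟩
    refine (hNle σ τ h1 h2 h3).trans ?_
    have h5 : (τ - σ) ^ μ ≤ η ^ μ := Real.rpow_le_rpow (by linarith) h4 hμ0.le
    have h6 := mul_le_mul_of_nonneg_left h5 hH0
    linarith
  have hΔN : ∀ s t u : ℝ, 0 ≤ s → s ≤ t → t ≤ u → u ≤ 1 → s < u →
      tripleDelta f s t u ≤ fernMod f s u := by
    intro s t u hs hst htu hu1 hsu
    apply le_csInf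
    case h₁ => exact ⟨_, u, hsu, le_rfl, rfl⟩
    rintro b ⟨θ, hθ1, hθ2, rfl⟩
    by_cases hθt : θ ≤ t
    · have hmem : max (dist (f s) (f s)) (dist (f t) (f u)) ∈
          {y : ℝ | ∃ s' u' : ℝ, s ≤ s' ∧ s' < θ ∧ θ ≤ u' ∧ u' ≤ u ∧
            y = max (dist (f s) (f s')) (dist (f u') (f u))} :=
        ⟨s, t, le_rfl, hθ1, hθt, htu, rfl⟩
      refine le_trans ?_ (le_csSup (hSbdd s u θ hs hu1) hmem)
      exact le_trans (min_le_right _ _) (le_max_right _ _)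
    · push_neg at hθt
      have hmem : max (dist (f s) (f t)) (dist (f u) (f u)) ∈
          {y : ℝ | ∃ s' u' : ℝ, s ≤ s' ∧ s' < θ ∧ θ ≤ u' ∧ u' ≤ u ∧
            y = max (dist (f s) (f s')) (dist (f u') (f u))} :=
        ⟨t, u, hst, hθt, hθ2, le_rfl, rfl⟩
      refine le_trans ?_ (le_csSup (hSbdd s u θ hs hu1) hmem)
      exact le_trans (min_le_left _ _) (le_max_left _ _)
  have hHT : holderSemi μ f ≤ tildeSemi μ f := by
    apply Real.sSup_le _ hT0
    rintro x ⟨s, t, u, hs, hst, htu, hu1, rfl⟩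
    rcases eq_or_lt_of_le (hst.trans htu) with h | hsu
    · rw [← h]
      simp only [sub_self, Real.zero_rpow hμne, div_zero]
      exact hT0
    · have h1 : tripleDelta f s t u ≤ fernMod f s u := hΔN s t u hs hst htu hu1 hsu
      have h2 : fernMod f s u ≤ fernEta f (u - s) :=
        le_csSup (hFetaBdd (u - s) (by linarith)) ⟨s, u, hs, hsu, hu1, le_rfl, rfl⟩
      have h3 : fernEta f (u - s) / (u - s) ^ μ ≤ tildeSemi μ f :=
        le_csSup hTset_bdd ⟨u - s, by linarith, rfl⟩
      have hp : 0 < (u - s) ^ μ := Real.rpow_pos_of_pos (by linarith) μ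
      rw [div_le_iff₀ hp] at h3
      rw [div_le_iff₀ hp]
      linarith
  exact ⟨by linarith, by linarith⟩
end
end

section
/- Let X : [0,1]×Ω → ℝ^k be measurable with, for some C₀ > 0, p > 1, r > 0: E[(|X_t−X_s| ∧ |X_t−X_u|)^p] ≤ C₀(u−s)^{1+r} for all 0 ≤ s < t < u ≤ 1, E[|X_1−X_t|^p] ≤ C₀(1−t)^r, and E[|X_0−X_t|^p] ≤ C₀ t^r. If almost surely X ∈ D^μ([0,1],ℝ^k) for some μ ∈ (0,1) with μ < r/p, then E[ sup_{0≤t≤1} |X_t|^p ] ≤ N·( C₀ + E∫₀¹ |X_t|^p dt ) for a constant N = N(μ,r,p). -/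
open MeasureTheory Set Filter

noncomputable section

open scoped ENNReal

section DetHelpers

variable {E : Type*} [MetricSpace E] {μ : ℝ}

lemma tripleDelta_nonneg (f : ℝ → E) (s t u : ℝ) : 0 ≤ tripleDelta f s t u :=
  le_min dist_nonneg dist_nonneg

lemma td_rec_core (f : ℝ → E) (a t h b : ℝ) :
    tripleDelta f a t b ≤ dist (f t) (f h) + tripleDelta f a h b := by
  have h1 : dist (f a) (f t) ≤ dist (f t) (f h) + dist (f a) (f h) := by
    rw [dist_comm (f t) (f h)]
    have := dist_triangle (f a) (f h) (f t)
    linarith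
  have h2 : dist (f t) (f b) ≤ dist (f t) (f h) + dist (f h) (f b) :=
    dist_triangle _ _ _
  calc tripleDelta f a t b ≤ min (dist (f t) (f h) + dist (f a) (f h))
        (dist (f t) (f h) + dist (f h) (f b)) := min_le_min h1 h2
    _ = dist (f t) (f h) + tripleDelta f a h b := by
        rw [tripleDelta, min_add_add_left]

lemma td_rec_left (f : ℝ → E) (a t h b : ℝ) :
    tripleDelta f a t b ≤ tripleDelta f a t h + tripleDelta f a h b := by
  rcases le_total (dist (f a) (f t)) (dist (f t) (f h)) with hc | hc
  · have : tripleDelta f a t h = dist (f a) (f t) := min_eq_left hc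
    rw [this]
    exact le_add_of_le_of_nonneg (min_le_left _ _) (tripleDelta_nonneg f a h b)
  · have : tripleDelta f a t h = dist (f t) (f h) := min_eq_right hc
    rw [this]
    exact td_rec_core f a t h b

lemma td_rec_right (f : ℝ → E) (a t h b : ℝ) :
    tripleDelta f a t b ≤ tripleDelta f h t b + tripleDelta f a h b := by
  rcases le_total (dist (f t) (f b)) (dist (f h) (f t)) with hc | hc
  · have : tripleDelta f h t b = dist (f t) (f b) := min_eq_right hc
    rw [this]
    exact le_add_of_le_of_nonneg (min_le_right _ _) (tripleDelta_nonneg f a h b)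
  · have : tripleDelta f h t b = dist (f h) (f t) := min_eq_left hc
    rw [this, dist_comm (f h) (f t)]
    exact td_rec_core f a t h b

lemma dist_le_td (f : ℝ → E) (t : ℝ) :
    dist (f 0) (f t) ≤ tripleDelta f 0 t 1 + dist (f 0) (f 1) := by
  rcases le_total (dist (f 0) (f t)) (dist (f t) (f 1)) with hc | hc
  · have : tripleDelta f 0 t 1 = dist (f 0) (f t) := min_eq_left hc
    rw [this]; exact le_add_of_le_of_nonneg le_rfl dist_nonneg
  · have : tripleDelta f 0 t 1 = dist (f t) (f 1) := min_eq_right hc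
    rw [this]
    have := dist_triangle (f 0) (f 1) (f t)
    rw [dist_comm (f 1) (f t)] at this
    linarith

lemma floor_two_mul_cases (x : ℝ) : ⌊2*x⌋ = 2*⌊x⌋ ∨ ⌊2*x⌋ = 2*⌊x⌋+1 := by
  have h1 : 2*⌊x⌋ ≤ ⌊2*x⌋ := by
    apply Int.le_floor.2
    push_cast
    nlinarith [Int.floor_le x]
  have h2 : ⌊2*x⌋ < 2*⌊x⌋ + 2 := by
    apply Int.floor_lt.2
    push_cast
    nlinarith [Int.lt_floor_add_one x]
  omega

/-- level-`m`, index-`j` dyadic triple variation. -/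
def dyDelta (f : ℝ → E) (m j : ℕ) : ℝ :=
  tripleDelta f ((j:ℝ) / 2^m) ((j:ℝ) / 2^m + ((2:ℝ)^(m+1))⁻¹) ((j:ℝ) / 2^m + ((2:ℝ)^m)⁻¹)

lemma dyDelta_nonneg (f : ℝ → E) (m j : ℕ) : 0 ≤ dyDelta f m j :=
  tripleDelta_nonneg f _ _ _

/-- max over level-`m` dyadic triples. -/
def gsup (f : ℝ → E) (m : ℕ) : ℝ :=
  (Finset.range (2^m)).sup' (Finset.nonempty_range_iff.2 (by positivity)) (dyDelta f m)

lemma gsup_nonneg (f : ℝ → E) (m : ℕ) : 0 ≤ gsup f m :=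
  le_trans (tripleDelta_nonneg f _ _ _)
    (Finset.le_sup' (dyDelta f m) (Finset.mem_range.2 (by positivity)))

/-- dyadic left endpoint -/
def aa (n : ℕ) (t : ℝ) : ℝ := (⌊t * 2^n⌋ : ℤ) / 2^n

lemma chain_aux (f : ℝ → E) {t : ℝ} (ht0 : 0 ≤ t) (ht1 : t < 1) (n : ℕ) :
    tripleDelta f 0 t 1 ≤ (∑ m ∈ Finset.range n, gsup f m)
      + tripleDelta f (aa n t) t (aa n t + ((2:ℝ)^n)⁻¹) := by
  induction n with
  | zero =>
      have h0 : aa 0 t = 0 := by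
        simp [aa, Int.floor_eq_zero_iff, ht0, ht1, Set.mem_Ico]
      simp [h0]
  | succ n ih =>
      have hj0 : (0:ℤ) ≤ ⌊t * 2^n⌋ := Int.floor_nonneg.2 (by positivity)
      have hjlt : ⌊t * 2^n⌋ < ((2^n : ℕ) : ℤ) := by
        apply Int.floor_lt.2
        push_cast
        nlinarith [pow_pos (show (0:ℝ) < 2 by norm_num) n]
      have hx : t * 2^(n+1) = 2 * (t * 2^n) := by ring
      have hmem : (⌊t * 2^n⌋).toNat ∈ Finset.range (2^n) := by
        rw [Finset.mem_range]
        omega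
      have hcast : ((⌊t * 2^n⌋.toNat : ℕ) : ℝ) = ((⌊t * 2^n⌋ : ℤ) : ℝ) := by
        exact_mod_cast congrArg (fun z : ℤ => (z : ℝ)) (Int.toNat_of_nonneg hj0)
      have hkey : tripleDelta f (aa n t) (aa n t + ((2:ℝ)^(n+1))⁻¹) (aa n t + ((2:ℝ)^n)⁻¹)
          ≤ gsup f n := by
        have h := Finset.le_sup' (dyDelta f n) hmem
        unfold dyDelta at h
        rw [hcast] at h
        have e1 : ((⌊t * 2^n⌋ : ℤ) : ℝ) / 2^n = aa n t := rfl
        rwa [e1] at h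
      have hend : aa n t + ((2:ℝ)^(n+1))⁻¹ + ((2:ℝ)^(n+1))⁻¹ = aa n t + ((2:ℝ)^n)⁻¹ := by
        have h2 : (2:ℝ)^(n+1) = 2 * 2^n := by ring
        rw [h2]
        field_simp
        ring
      suffices hstep : tripleDelta f (aa n t) t (aa n t + ((2:ℝ)^n)⁻¹)
          ≤ tripleDelta f (aa (n+1) t) t (aa (n+1) t + ((2:ℝ)^(n+1))⁻¹) + gsup f n by
        rw [Finset.sum_range_succ]
        linarith [ih]
      rcases floor_two_mul_cases (t * 2^n) with hc | hc
      · have ha : aa (n+1) t = aa n t := by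
          rw [aa, aa, hx, hc]
          push_cast
          field_simp
          ring
        rw [ha]
        have step := td_rec_left f (aa n t) t (aa n t + ((2:ℝ)^(n+1))⁻¹)
          (aa n t + ((2:ℝ)^n)⁻¹)
        linarith
      · have ha : aa (n+1) t = aa n t + ((2:ℝ)^(n+1))⁻¹ := by
          have hmid : aa n t + ((2:ℝ)^(n+1))⁻¹
              = ((2 * ⌊t * 2^n⌋ + 1 : ℤ) : ℝ) / 2^(n+1) := by
            rw [aa]
            push_cast
            field_simp
            ring
          rw [hmid, aa, hx, hc]
        rw [ha, hend]
        have step := td_rec_right f (aa n t) t (aa n t + ((2:ℝ)^(n+1))⁻¹)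
          (aa n t + ((2:ℝ)^n)⁻¹)
        linarith

lemma holder_zero_mem (hμ : 0 < μ) (f : ℝ → E) : (0:ℝ) ∈ holderSet μ f := by
  refine ⟨0, 0, 0, le_rfl, le_rfl, le_rfl, by norm_num, ?_⟩
  rw [tripleDelta]
  simp [Real.zero_rpow (ne_of_gt hμ)]

lemma holder_bound_nonneg (hμ : 0 < μ) (f : ℝ → E) {M : ℝ}
    (hM : ∀ x ∈ holderSet μ f, x ≤ M) : 0 ≤ M :=
  hM 0 (holder_zero_mem hμ f)

/-- remainder bound from the Hölder seminorm bound -/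
lemma remainder_bound (hμ : 0 < μ) (f : ℝ → E) {M : ℝ}
    (hM : ∀ x ∈ holderSet μ f, x ≤ M) {t : ℝ} (ht0 : 0 ≤ t) (ht1 : t < 1) (n : ℕ) :
    tripleDelta f (aa n t) t (aa n t + ((2:ℝ)^n)⁻¹) ≤ M * (((2:ℝ)^n)⁻¹) ^ μ := by
  have hj0 : (0:ℤ) ≤ ⌊t * 2^n⌋ := Int.floor_nonneg.2 (by positivity)
  have hjlt : ⌊t * 2^n⌋ < ((2^n : ℕ) : ℤ) := by
    apply Int.floor_lt.2
    push_cast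
    nlinarith [pow_pos (show (0:ℝ) < 2 by norm_num) n]
  have hpow : (0:ℝ) < 2^n := by positivity
  have hs0 : 0 ≤ aa n t := by
    rw [aa]
    apply div_nonneg _ (le_of_lt hpow)
    exact_mod_cast hj0
  have hst : aa n t ≤ t := by
    rw [aa, div_le_iff₀ hpow]
    exact Int.floor_le _
  have htu : t ≤ aa n t + ((2:ℝ)^n)⁻¹ := by
    rw [aa]
    have h1 : t * 2^n < (⌊t * 2^n⌋ : ℝ) + 1 := Int.lt_floor_add_one (t * 2^n)
    rw [div_add' _ _ _ (ne_of_gt hpow), le_div_iff₀ hpow,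
      inv_mul_cancel₀ (ne_of_gt hpow)]
    linarith
  have hu1 : aa n t + ((2:ℝ)^n)⁻¹ ≤ 1 := by
    rw [aa]
    have h1 : ((⌊t * 2^n⌋ : ℤ) : ℝ) + 1 ≤ 2^n := by
      have h2 : (⌊t * 2^n⌋ : ℤ) + 1 ≤ ((2^n : ℕ) : ℤ) := Int.lt_iff_add_one_le.1 hjlt
      calc ((⌊t * 2^n⌋ : ℤ) : ℝ) + 1 ≤ ((2^n : ℕ) : ℝ) := by exact_mod_cast h2
        _ = 2^n := by push_cast; ring
    rw [div_add' _ _ _ (ne_of_gt hpow), div_le_one hpow,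
      inv_mul_cancel₀ (ne_of_gt hpow)]
    linarith
  have hmem : tripleDelta f (aa n t) t (aa n t + ((2:ℝ)^n)⁻¹)
      / ((aa n t + ((2:ℝ)^n)⁻¹) - aa n t) ^ μ ∈ holderSet μ f :=
    ⟨aa n t, t, aa n t + ((2:ℝ)^n)⁻¹, hs0, hst, htu, hu1, rfl⟩
  have hMx := hM _ hmem
  have hdiff : (aa n t + ((2:ℝ)^n)⁻¹) - aa n t = ((2:ℝ)^n)⁻¹ := by ring
  rw [hdiff] at hMx
  have hrpos : (0:ℝ) < (((2:ℝ)^n)⁻¹) ^ μ := Real.rpow_pos_of_pos (by positivity) μ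
  calc tripleDelta f (aa n t) t (aa n t + ((2:ℝ)^n)⁻¹)
      = tripleDelta f (aa n t) t (aa n t + ((2:ℝ)^n)⁻¹) / (((2:ℝ)^n)⁻¹) ^ μ
        * (((2:ℝ)^n)⁻¹) ^ μ := by field_simp
    _ ≤ M * (((2:ℝ)^n)⁻¹) ^ μ := by
        apply mul_le_mul_of_nonneg_right hMx (le_of_lt hrpos)

lemma td_le_full (hμ : 0 < μ) (f : ℝ → E) {M : ℝ}
    (hM : ∀ x ∈ holderSet μ f, x ≤ M) {t : ℝ} (ht0 : 0 ≤ t) (ht1 : t ≤ 1) (n : ℕ) :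
    tripleDelta f 0 t 1 ≤ (∑ m ∈ Finset.range n, gsup f m) + M * (((2:ℝ)^n)⁻¹) ^ μ := by
  rcases lt_or_eq_of_le ht1 with ht1' | rfl
  · exact (chain_aux f ht0 ht1' n).trans
      (add_le_add_right (remainder_bound hμ f hM ht0 ht1' n) _)
  · have h0 : tripleDelta f 0 1 1 = 0 := by
      rw [tripleDelta]
      simp [dist_nonneg]
    rw [h0]
    have h1 : (0:ℝ) ≤ ∑ m ∈ Finset.range n, gsup f m :=
      Finset.sum_nonneg fun m _ => gsup_nonneg f m
    have h2 : (0:ℝ) ≤ M * (((2:ℝ)^n)⁻¹) ^ μ :=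
      mul_nonneg (holder_bound_nonneg hμ f hM) (Real.rpow_nonneg (by positivity) μ)
    linarith

lemma supNorm_nonneg {k : ℕ} (f : ℝ → EuclideanSpace ℝ (Fin k)) : 0 ≤ supNorm f :=
  Real.sSup_nonneg (by rintro x ⟨t, _, _, rfl⟩; exact norm_nonneg _)

/-- pathwise bound for the sup norm -/
lemma supNorm_pathwise {k : ℕ} (hμ : 0 < μ) (f : ℝ → EuclideanSpace ℝ (Fin k)) {M : ℝ}
    (hM : ∀ x ∈ holderSet μ f, x ≤ M) (n : ℕ) :
    supNorm f ≤ ‖f 0‖ + dist (f 0) (f 1)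
      + (∑ m ∈ Finset.range n, gsup f m) + M * (((2:ℝ)^n)⁻¹) ^ μ := by
  have hB : 0 ≤ ‖f 0‖ + dist (f 0) (f 1)
      + (∑ m ∈ Finset.range n, gsup f m) + M * (((2:ℝ)^n)⁻¹) ^ μ := by
    have h1 : (0:ℝ) ≤ ∑ m ∈ Finset.range n, gsup f m :=
      Finset.sum_nonneg fun m _ => gsup_nonneg f m
    have h2 : (0:ℝ) ≤ M * (((2:ℝ)^n)⁻¹) ^ μ :=
      mul_nonneg (holder_bound_nonneg hμ f hM) (Real.rpow_nonneg (by positivity) μ)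
    positivity
  apply Real.sSup_le _ hB
  rintro x ⟨t, ht0, ht1, rfl⟩
  have h1 : ‖f t‖ ≤ ‖f 0‖ + dist (f 0) (f t) := by
    have := dist_triangle (f t) (f 0) 0
    simp only [dist_zero_right] at this
    rw [dist_comm (f t) (f 0)] at this
    linarith
  have h2 := dist_le_td f t
  have h3 := td_le_full hμ f hM ht0 ht1 n
  linarith

/-- level-`m` dyadic max in `ℝ≥0∞`. -/
def eG (f : ℝ → E) (m : ℕ) : ℝ≥0∞ :=
  (Finset.range (2^m)).sup fun j => ENNReal.ofReal (dyDelta f m j)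

lemma ofReal_gsup_le (f : ℝ → E) (m : ℕ) : ENNReal.ofReal (gsup f m) ≤ eG f m := by
  have hne : (Finset.range (2^m)).Nonempty := Finset.nonempty_range_iff.2 (by positivity)
  obtain ⟨j, hj, hje⟩ := Finset.exists_mem_eq_sup' hne (dyDelta f m)
  rw [gsup, hje]
  exact Finset.le_sup (f := fun j => ENNReal.ofReal (dyDelta f m j)) hj

lemma epath {k : ℕ} (hμ : 0 < μ) (f : ℝ → EuclideanSpace ℝ (Fin k)) {M : ℝ}
    (hM : ∀ x ∈ holderSet μ f, x ≤ M) :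
    ENNReal.ofReal (supNorm f) ≤ ENNReal.ofReal ‖f 0‖
      + ENNReal.ofReal (dist (f 0) (f 1)) + ∑' m, eG f m := by
  set B : ℝ≥0∞ := ENNReal.ofReal ‖f 0‖ + ENNReal.ofReal (dist (f 0) (f 1)) + ∑' m, eG f m
  have hn : ∀ n : ℕ, ENNReal.ofReal (supNorm f)
      ≤ B + ENNReal.ofReal (M * (((2:ℝ)^n)⁻¹) ^ μ) := by
    intro n
    calc ENNReal.ofReal (supNorm f)
        ≤ ENNReal.ofReal (‖f 0‖ + dist (f 0) (f 1)
            + (∑ m ∈ Finset.range n, gsup f m) + M * (((2:ℝ)^n)⁻¹) ^ μ) :=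
          ENNReal.ofReal_le_ofReal (supNorm_pathwise hμ f hM n)
      _ ≤ ENNReal.ofReal (‖f 0‖ + dist (f 0) (f 1) + (∑ m ∈ Finset.range n, gsup f m))
            + ENNReal.ofReal (M * (((2:ℝ)^n)⁻¹) ^ μ) := ENNReal.ofReal_add_le
      _ ≤ (ENNReal.ofReal (‖f 0‖ + dist (f 0) (f 1))
            + ENNReal.ofReal (∑ m ∈ Finset.range n, gsup f m))
            + ENNReal.ofReal (M * (((2:ℝ)^n)⁻¹) ^ μ) :=
          add_le_add_left ENNReal.ofReal_add_le _
      _ ≤ B + ENNReal.ofReal (M * (((2:ℝ)^n)⁻¹) ^ μ) := by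
          apply add_le_add_left
          apply add_le_add
          · exact ENNReal.ofReal_add_le
          · calc ENNReal.ofReal (∑ m ∈ Finset.range n, gsup f m)
                ≤ ∑ m ∈ Finset.range n, ENNReal.ofReal (gsup f m) :=
                  le_of_eq (ENNReal.ofReal_sum_of_nonneg fun m _ => gsup_nonneg f m)
              _ ≤ ∑ m ∈ Finset.range n, eG f m :=
                  Finset.sum_le_sum fun m _ => ofReal_gsup_le f m
              _ ≤ ∑' m, eG f m := ENNReal.sum_le_tsum _
  have hlim : Filter.Tendsto (fun n : ℕ => B + ENNReal.ofReal (M * (((2:ℝ)^n)⁻¹) ^ μ))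
      atTop (nhds B) := by
    have h1 : Filter.Tendsto (fun n : ℕ => M * (((2:ℝ)^n)⁻¹) ^ μ) atTop (nhds 0) := by
      have he : ∀ n : ℕ, (((2:ℝ)^n)⁻¹) ^ μ = (((2:ℝ)⁻¹) ^ μ) ^ n := by
        intro n
        have h0 : (0:ℝ) ≤ 2⁻¹ := by norm_num
        calc (((2:ℝ)^n)⁻¹) ^ μ = (((2:ℝ)⁻¹) ^ (n:ℝ)) ^ μ := by
              rw [Real.rpow_natCast, inv_pow]
          _ = ((2:ℝ)⁻¹) ^ ((n:ℝ) * μ) := (Real.rpow_mul h0 _ _).symm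
          _ = (((2:ℝ)⁻¹) ^ μ) ^ (n:ℝ) := by rw [mul_comm, Real.rpow_mul h0]
          _ = (((2:ℝ)⁻¹) ^ μ) ^ n := Real.rpow_natCast _ n
      simp only [he]
      rw [show (0:ℝ) = M * 0 by ring]
      apply Filter.Tendsto.const_mul
      apply tendsto_pow_atTop_nhds_zero_of_lt_one (Real.rpow_nonneg (by norm_num) μ)
      exact Real.rpow_lt_one (by norm_num) (by norm_num) hμ
    have h2 : Filter.Tendsto (fun n : ℕ => ENNReal.ofReal (M * (((2:ℝ)^n)⁻¹) ^ μ))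
        atTop (nhds 0) := by
      rw [show (0:ℝ≥0∞) = ENNReal.ofReal 0 by simp]
      exact ENNReal.tendsto_ofReal h1
    have := Filter.Tendsto.const_add B h2
    simpa using this
  exact ge_of_tendsto' hlim hn

/-- boundedness of the norms on `[0,1]` from the `leftSet` bound. -/
lemma norm_le_supNorm {k : ℕ} (hμ : 0 < μ) (hμ1 : μ < 1) (f : ℝ → EuclideanSpace ℝ (Fin k))
    (hbdd : BddAbove (leftSet μ f)) {t : ℝ} (ht0 : 0 ≤ t) (ht1 : t ≤ 1) :
    ‖f t‖ ≤ supNorm f := by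
  obtain ⟨Mₗ, hMₗ⟩ := hbdd
  have hMl0 : 0 ≤ Mₗ := by
    have hmem : dist (f 0) (f 1) / (1:ℝ) ^ μ ∈ leftSet μ f := ⟨1, one_pos, le_rfl, rfl⟩
    have := hMₗ hmem
    rw [Real.one_rpow] at this
    have h0 : 0 ≤ dist (f 0) (f 1) / 1 := by positivity
    linarith
  have hub : (‖f 0‖ + Mₗ) ∈ upperBounds {x : ℝ | ∃ s : ℝ, 0 ≤ s ∧ s ≤ 1 ∧ x = ‖f s‖} := by
    rintro x ⟨s, hs0, hs1, rfl⟩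
    have h1 : ‖f s‖ ≤ ‖f 0‖ + dist (f 0) (f s) := by
      have := dist_triangle (f s) (f 0) 0
      simp only [dist_zero_right] at this
      rw [dist_comm (f s) (f 0)] at this
      linarith
    have h2 : dist (f 0) (f s) ≤ Mₗ := by
      rcases eq_or_lt_of_le hs0 with rfl | hs0'
      · simp [hMl0]
      · have hmem : dist (f 0) (f s) / s ^ μ ∈ leftSet μ f := ⟨s, hs0', hs1, rfl⟩
        have hle := hMₗ hmem
        have hspos : (0:ℝ) < s ^ μ := Real.rpow_pos_of_pos hs0' μ
        have hs1' : s ^ μ ≤ 1 := Real.rpow_le_one (le_of_lt hs0') hs1 (le_of_lt hμ)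
        calc dist (f 0) (f s) = dist (f 0) (f s) / s ^ μ * s ^ μ := by field_simp
          _ ≤ Mₗ * s ^ μ := mul_le_mul_of_nonneg_right hle (le_of_lt hspos)
          _ ≤ Mₗ * 1 := mul_le_mul_of_nonneg_left hs1' hMl0
          _ = Mₗ := mul_one _
    linarith
  exact le_csSup ⟨_, hub⟩ ⟨t, ht0, ht1, rfl⟩

end DetHelpers
section ProbHelpers

open ENNReal

lemma measurable_finset_sup {Ω : Type*} [MeasurableSpace Ω] {ι : Type*} (s : Finset ι)
    (g : ι → Ω → ℝ≥0∞) (hg : ∀ i, Measurable (g i)) :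
    Measurable (fun ω => s.sup (fun i => g i ω)) := by
  classical
  induction s using Finset.induction_on with
  | empty => simpa using measurable_const
  | insert _ _ hni ih =>
      simp only [Finset.sup_insert]
      exact Measurable.sup (hg _) ih

lemma epow_add {p : ℝ} (hp : 0 ≤ p) (a b : ℝ≥0∞) :
    (a + b) ^ p ≤ (2:ℝ≥0∞)^p * (a^p + b^p) := by
  rcases le_total a b with h | h
  · calc (a + b)^p ≤ (2*b)^p := ENNReal.rpow_le_rpow (by rw [two_mul]; exact add_le_add_left h _) hp
      _ = 2^p * b^p := ENNReal.mul_rpow_of_nonneg _ _ hp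
      _ ≤ 2^p * (a^p + b^p) := mul_le_mul_right le_add_self _
  · calc (a + b)^p ≤ (2*a)^p := ENNReal.rpow_le_rpow (by rw [two_mul]; exact add_le_add_right h _) hp
      _ = 2^p * a^p := ENNReal.mul_rpow_of_nonneg _ _ hp
      _ ≤ 2^p * (a^p + b^p) := mul_le_mul_right le_self_add _

lemma fin_mink {Ω : Type*} [MeasurableSpace Ω] (P : MeasureTheory.Measure Ω) {p : ℝ}
    (hp1 : 1 ≤ p) (g : ℕ → Ω → ℝ≥0∞) (hg : ∀ m, Measurable (g m)) (n : ℕ) :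
    (∫⁻ ω, (∑ m ∈ Finset.range n, g m ω) ^ p ∂P) ^ (1/p)
      ≤ ∑ m ∈ Finset.range n, (∫⁻ ω, (g m ω) ^ p ∂P) ^ (1/p) := by
  have hp0 : (0:ℝ) < p := lt_of_lt_of_le one_pos hp1
  induction n with
  | zero =>
      have h1 := ENNReal.zero_rpow_of_pos hp0
      have h2 := ENNReal.zero_rpow_of_pos (show (0:ℝ) < 1/p by positivity)
      simp only [Finset.range_zero, Finset.sum_empty]
      simp only [h1, MeasureTheory.lintegral_zero, h2]
      exact le_rfl
  | succ n ih =>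
      simp only [Finset.sum_range_succ]
      calc (∫⁻ ω, (∑ m ∈ Finset.range n, g m ω + g n ω) ^ p ∂P) ^ (1/p)
          ≤ (∫⁻ ω, (∑ m ∈ Finset.range n, g m ω) ^ p ∂P) ^ (1/p)
            + (∫⁻ ω, (g n ω) ^ p ∂P) ^ (1/p) :=
            ENNReal.lintegral_Lp_add_le
              (Finset.measurable_sum _ (fun m _ => hg m)).aemeasurable
              (hg n).aemeasurable hp1
        _ ≤ _ := add_le_add_left ih _

lemma real_geom {C₀ p r : ℝ} (hC : 0 ≤ C₀) (m : ℕ) :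
    ((2:ℝ)^m * (C₀ * (((2:ℝ)^m)⁻¹) ^ (1+r))) ^ (1/p)
      = C₀ ^ (1/p) * ((2:ℝ) ^ (-(r/p))) ^ m := by
  have h2m : (0:ℝ) < 2^m := by positivity
  have e1 : (((2:ℝ)^m)⁻¹) ^ (1+r) = ((2:ℝ)^m) ^ (-(1+r)) := by
    rw [Real.inv_rpow (le_of_lt h2m), ← Real.rpow_neg (le_of_lt h2m)]
  have e2 : (2:ℝ)^m * (C₀ * (((2:ℝ)^m)⁻¹) ^ (1+r)) = C₀ * ((2:ℝ)^m) ^ (-r) := by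
    rw [e1]
    have e3 : (2:ℝ)^m * ((2:ℝ)^m) ^ (-(1+r)) = ((2:ℝ)^m) ^ (-r) := by
      nth_rewrite 1 [← Real.rpow_one ((2:ℝ)^m)]
      rw [← Real.rpow_add h2m]
      congr 1
      ring
    calc (2:ℝ)^m * (C₀ * ((2:ℝ)^m) ^ (-(1+r)))
        = C₀ * ((2:ℝ)^m * ((2:ℝ)^m) ^ (-(1+r))) := by ring
      _ = C₀ * ((2:ℝ)^m) ^ (-r) := by rw [e3]
  rw [e2, Real.mul_rpow hC (Real.rpow_nonneg (le_of_lt h2m) _)]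
  congr 1
  rw [← Real.rpow_natCast ((2:ℝ) ^ (-(r/p))) m, ← Real.rpow_mul (by norm_num : (0:ℝ) ≤ 2),
    ← Real.rpow_mul (le_of_lt h2m), ← Real.rpow_natCast (2:ℝ) m,
    ← Real.rpow_mul (by norm_num : (0:ℝ) ≤ 2)]
  congr 1
  ring

end ProbHelpers
theorem stmt13 (k : ℕ) (p r μ : ℝ) (hp : 1 < p) (hr : 0 < r)
    (hμ : μ ∈ Set.Ioo (0:ℝ) 1) (hμr : μ < r / p) :
    ∃ N : ℝ, 0 < N ∧
      ∀ {Ω : Type} [MeasureSpace Ω] [IsProbabilityMeasure (volume : Measure Ω)]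
        (X : ℝ → Ω → EuclideanSpace ℝ (Fin k)),
        Measurable (fun q : ℝ × Ω => X q.1 q.2) →
        ∀ C₀ : ℝ, 0 < C₀ →
        (∀ s t u : ℝ, 0 ≤ s → s < t → t < u → u ≤ 1 →
          (∫ ω, tripleDelta (fun v => X v ω) s t u ^ p) ≤ C₀ * (u - s) ^ (1 + r)) →
        (∀ t : ℝ, 0 ≤ t → t ≤ 1 →
          (∫ ω, dist (X 1 ω) (X t ω) ^ p) ≤ C₀ * (1 - t) ^ r) →
        (∀ t : ℝ, 0 ≤ t → t ≤ 1 →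
          (∫ ω, dist (X 0 ω) (X t ω) ^ p) ≤ C₀ * t ^ r) →
        (∀ᵐ ω, MemDHolder μ (fun v => X v ω)) →
        (∫ ω, supNorm (fun v => X v ω) ^ p) ≤
          N * (C₀ + ∫ ω, ∫ t in (0:ℝ)..1, ‖X t ω‖ ^ p) := by
  classical
  have hp0 : (0:ℝ) < p := lt_trans one_pos hp
  have hp0' : (0:ℝ) ≤ p := le_of_lt hp0
  have hμ0 : 0 < μ := hμ.1
  have hμ1 : μ < 1 := hμ.2
  set ρ : ℝ := (2:ℝ) ^ (-(r/p)) with hρdef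
  have hρpos : 0 < ρ := Real.rpow_pos_of_pos two_pos _
  have hρlt : ρ < 1 := by
    apply Real.rpow_lt_one_of_one_lt_of_neg one_lt_two
    have : 0 < r / p := div_pos hr hp0
    linarith
  set σ : ℝ := (1 - ρ)⁻¹ with hσdef
  have hσpos : 0 < σ := inv_pos.2 (by linarith)
  set N : ℝ := 2^p * 2^p * (2^p + 1 + σ^p) with hNdef
  have hNpos : 0 < N := by positivity
  refine ⟨N, hNpos, ?_⟩
  intro Ω _ _ X hX C₀ hC₀ hTriple hRight hLeft hae
  have hInner0 : ∀ ω : Ω, 0 ≤ ∫ t in (0:ℝ)..1, ‖X t ω‖ ^ p :=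
    fun ω => intervalIntegral.integral_nonneg (by norm_num)
      (fun t _ => Real.rpow_nonneg (norm_nonneg _) p)
  by_cases hInt : Integrable (fun ω => supNorm (fun v => X v ω) ^ p) (volume : Measure Ω)
  swap
  · rw [integral_undef hInt]
    have h1 : 0 ≤ ∫ ω, ∫ t in (0:ℝ)..1, ‖X t ω‖ ^ p := by
      apply integral_nonneg
      intro ω
      exact hInner0 ω
    positivity
  -- measurability basics
  have hXt : ∀ t : ℝ, Measurable (fun ω => X t ω) := fun t => hX.comp measurable_prodMk_left
  have hdyM : ∀ m j : ℕ, Measurable (fun ω => dyDelta (fun v => X v ω) m j) :=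
    fun m j => ((hXt _).dist (hXt _)).min ((hXt _).dist (hXt _))
  have heGM : ∀ m : ℕ, Measurable (fun ω => eG (fun v => X v ω) m) :=
    fun m => measurable_finset_sup _ _ (fun j => (hdyM m j).ennreal_ofReal)
  have hrpowM : ∀ g : Ω → ℝ, Measurable g → Measurable (fun ω => g ω ^ p) :=
    fun g hg => (Real.continuous_rpow_const hp0').measurable.comp hg
  have hrpowM' : ∀ {α : Type} [MeasurableSpace α] (g : α → ℝ), Measurable g →
      Measurable (fun a => g a ^ p) :=
    fun g hg => (Real.continuous_rpow_const hp0').measurable.comp hg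
  -- a.e. facts
  have hG1 : ∀ᵐ ω, ∀ t : ℝ, 0 ≤ t → t ≤ 1 → ‖X t ω‖ ≤ supNorm (fun v => X v ω) := by
    filter_upwards [hae] with ω hω
    intro t ht0 ht1
    exact norm_le_supNorm hμ0 hμ1 _ hω.2.2.1 ht0 ht1
  have hG2 : ∀ᵐ ω, ENNReal.ofReal (supNorm (fun v => X v ω))
      ≤ ENNReal.ofReal ‖X 0 ω‖ + ENNReal.ofReal (dist (X 0 ω) (X 1 ω))
        + ∑' m, eG (fun v => X v ω) m := by
    filter_upwards [hae] with ω hω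
    obtain ⟨M, hM⟩ := hω.2.1
    exact epath hμ0 _ (fun x hx => hM hx)
  -- integrability of the building blocks
  have hmaj : Integrable (fun ω => 2^p * supNorm (fun v => X v ω) ^ p) := hInt.const_mul _
  have hIdist : ∀ s t : ℝ, 0 ≤ s → s ≤ 1 → 0 ≤ t → t ≤ 1 →
      Integrable (fun ω => dist (X s ω) (X t ω) ^ p) := by
    intro s t hs0 hs1 ht0 ht1
    apply hmaj.mono' (hrpowM _ ((hXt s).dist (hXt t))).aestronglyMeasurable
    filter_upwards [hG1] with ω hω
    rw [Real.norm_eq_abs, abs_of_nonneg (Real.rpow_nonneg dist_nonneg p)]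
    have hd : dist (X s ω) (X t ω) ≤ 2 * supNorm (fun v => X v ω) := by
      have h1 := dist_triangle (X s ω) 0 (X t ω)
      rw [dist_zero_left, dist_comm (X s ω) 0, dist_zero_left] at h1
      have h2 := hω s hs0 hs1
      have h3 := hω t ht0 ht1
      linarith
    calc dist (X s ω) (X t ω) ^ p ≤ (2 * supNorm (fun v => X v ω)) ^ p :=
        Real.rpow_le_rpow dist_nonneg hd hp0'
      _ = 2^p * supNorm (fun v => X v ω) ^ p := Real.mul_rpow (by norm_num) (supNorm_nonneg _)
  have hpos : ∀ m : ℕ, ∀ j ∈ Finset.range (2^m),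
      0 ≤ ((j:ℝ) / 2^m) ∧ ((j:ℝ) / 2^m) < ((j:ℝ) / 2^m + ((2:ℝ)^(m+1))⁻¹)
        ∧ ((j:ℝ) / 2^m + ((2:ℝ)^(m+1))⁻¹) < ((j:ℝ) / 2^m + ((2:ℝ)^m)⁻¹)
        ∧ ((j:ℝ) / 2^m + ((2:ℝ)^m)⁻¹) ≤ 1 := by
    intro m j hj
    have hpow : (0:ℝ) < 2^m := by positivity
    refine ⟨by positivity, lt_add_of_pos_right _ (by positivity), ?_, ?_⟩
    · apply add_lt_add_right
      apply inv_strictAnti₀ hpow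
      calc (2:ℝ)^m < 2^m * 2 := by nlinarith
        _ = 2^(m+1) := by ring
    · have hj' : (j:ℝ) + 1 ≤ 2^m := by
        have h2 : (j:ℕ) + 1 ≤ 2^m := Nat.succ_le_of_lt (Finset.mem_range.1 hj)
        calc ((j:ℝ) + 1) = ((j + 1 : ℕ) : ℝ) := by push_cast; ring
          _ ≤ ((2^m : ℕ) : ℝ) := by exact_mod_cast h2
          _ = 2^m := by push_cast; ring
      rw [div_add' _ _ _ (ne_of_gt hpow), div_le_one hpow,
        inv_mul_cancel₀ (ne_of_gt hpow)]
      linarith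
  have hIdel : ∀ m : ℕ, ∀ j ∈ Finset.range (2^m),
      Integrable (fun ω => dyDelta (fun v => X v ω) m j ^ p) := by
    intro m j hj
    obtain ⟨h0, h1, h2, h3⟩ := hpos m j hj
    apply hmaj.mono' (hrpowM _ (hdyM m j)).aestronglyMeasurable
    filter_upwards [hG1] with ω hω
    rw [Real.norm_eq_abs, abs_of_nonneg (Real.rpow_nonneg (dyDelta_nonneg _ _ _) p)]
    have hd : dyDelta (fun v => X v ω) m j ≤ 2 * supNorm (fun v => X v ω) := by
      have hle : dyDelta (fun v => X v ω) m j
          ≤ dist (X ((j:ℝ)/2^m) ω) (X ((j:ℝ)/2^m + ((2:ℝ)^(m+1))⁻¹) ω) := min_le_left _ _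
      have htri := dist_triangle (X ((j:ℝ)/2^m) ω) 0 (X ((j:ℝ)/2^m + ((2:ℝ)^(m+1))⁻¹) ω)
      rw [dist_zero_left, dist_comm _ (0 : EuclideanSpace ℝ (Fin k)), dist_zero_left] at htri
      have ha := hω ((j:ℝ)/2^m) h0 (by linarith)
      have hb := hω ((j:ℝ)/2^m + ((2:ℝ)^(m+1))⁻¹) (by positivity) (by linarith)
      linarith
    calc dyDelta (fun v => X v ω) m j ^ p ≤ (2 * supNorm (fun v => X v ω)) ^ p :=
        Real.rpow_le_rpow (dyDelta_nonneg _ _ _) hd hp0'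
      _ = 2^p * supNorm (fun v => X v ω) ^ p := Real.mul_rpow (by norm_num) (supNorm_nonneg _)
  -- Lⁱⁿᵗ bound for a single dyadic triple
  have hL1 : ∀ m : ℕ, ∀ j ∈ Finset.range (2^m),
      ∫⁻ ω, (ENNReal.ofReal (dyDelta (fun v => X v ω) m j)) ^ p
        ≤ ENNReal.ofReal (C₀ * (((2:ℝ)^m)⁻¹) ^ (1+r)) := by
    intro m j hj
    obtain ⟨h0, h1, h2, h3⟩ := hpos m j hj
    calc ∫⁻ ω, (ENNReal.ofReal (dyDelta (fun v => X v ω) m j)) ^ p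
        = ∫⁻ ω, ENNReal.ofReal (dyDelta (fun v => X v ω) m j ^ p) :=
          lintegral_congr fun ω =>
            ENNReal.ofReal_rpow_of_nonneg (dyDelta_nonneg _ _ _) hp0'
      _ = ENNReal.ofReal (∫ ω, dyDelta (fun v => X v ω) m j ^ p) :=
          (ofReal_integral_eq_lintegral_ofReal (hIdel m j hj)
            (Filter.Eventually.of_forall fun ω =>
              Real.rpow_nonneg (dyDelta_nonneg _ _ _) p)).symm
      _ ≤ ENNReal.ofReal (C₀ * (((2:ℝ)^m)⁻¹) ^ (1+r)) := by
          apply ENNReal.ofReal_le_ofReal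
          have hb := hTriple ((j:ℝ)/2^m) ((j:ℝ)/2^m + ((2:ℝ)^(m+1))⁻¹)
            ((j:ℝ)/2^m + ((2:ℝ)^m)⁻¹) h0 h1 h2 h3
          rw [add_sub_cancel_left] at hb
          exact hb
  -- Lⁱⁿᵗ bound for the level maximum
  have hL2 : ∀ m : ℕ, ∫⁻ ω, (eG (fun v => X v ω) m) ^ p
      ≤ ((2^m : ℕ) : ℝ≥0∞) * ENNReal.ofReal (C₀ * (((2:ℝ)^m)⁻¹) ^ (1+r)) := by
    intro m
    have hpt : ∀ ω, (eG (fun v => X v ω) m) ^ p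
        ≤ ∑ j ∈ Finset.range (2^m),
            (ENNReal.ofReal (dyDelta (fun v => X v ω) m j)) ^ p := by
      intro ω
      have hne : (Finset.range (2^m)).Nonempty := Finset.nonempty_range_iff.2 (by positivity)
      obtain ⟨j0, hj0, hje⟩ := Finset.exists_mem_eq_sup (Finset.range (2^m)) hne
        (fun j => ENNReal.ofReal (dyDelta (fun v => X v ω) m j))
      rw [eG, hje]
      exact Finset.single_le_sum
        (f := fun j => (ENNReal.ofReal (dyDelta (fun v => X v ω) m j)) ^ p)
        (fun i _ => zero_le) hj0
    calc ∫⁻ ω, (eG (fun v => X v ω) m) ^ p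
        ≤ ∫⁻ ω, ∑ j ∈ Finset.range (2^m),
            (ENNReal.ofReal (dyDelta (fun v => X v ω) m j)) ^ p := lintegral_mono hpt
      _ = ∑ j ∈ Finset.range (2^m),
            ∫⁻ ω, (ENNReal.ofReal (dyDelta (fun v => X v ω) m j)) ^ p :=
          lintegral_finset_sum _ (fun j _ =>
            ENNReal.continuous_rpow_const.measurable.comp (hdyM m j).ennreal_ofReal)
      _ ≤ ∑ j ∈ Finset.range (2^m), ENNReal.ofReal (C₀ * (((2:ℝ)^m)⁻¹) ^ (1+r)) :=
          Finset.sum_le_sum (fun j hj => hL1 m j hj)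
      _ = ((2^m : ℕ) : ℝ≥0∞) * ENNReal.ofReal (C₀ * (((2:ℝ)^m)⁻¹) ^ (1+r)) := by
          rw [Finset.sum_const, Finset.card_range, nsmul_eq_mul]
  -- chaining series bound
  have hC : ∫⁻ ω, (∑' m, eG (fun v => X v ω) m) ^ p ≤ ENNReal.ofReal (C₀ * σ^p) := by
    have hm1 : ∀ m : ℕ, (∫⁻ ω, (eG (fun v => X v ω) m) ^ p) ^ (1/p)
        ≤ ENNReal.ofReal (C₀ ^ (1/p)) * (ENNReal.ofReal ρ) ^ m := by
      intro m
      have h2 : ((2^m : ℕ) : ℝ≥0∞) * ENNReal.ofReal (C₀ * (((2:ℝ)^m)⁻¹) ^ (1+r))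
          = ENNReal.ofReal ((2:ℝ)^m * (C₀ * (((2:ℝ)^m)⁻¹) ^ (1+r))) := by
        rw [show ((2^m : ℕ) : ℝ≥0∞) = ENNReal.ofReal ((2:ℝ)^m) by
          rw [← ENNReal.ofReal_natCast (2^m)]; congr 1; push_cast; ring]
        rw [← ENNReal.ofReal_mul (show (0:ℝ) ≤ (2:ℝ)^m by positivity)]
      have h3 := ENNReal.rpow_le_rpow ((hL2 m).trans_eq h2)
        (by positivity : (0:ℝ) ≤ 1/p)
      rw [ENNReal.ofReal_rpow_of_nonneg (by positivity) (by positivity),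
        real_geom (le_of_lt hC₀) m, ENNReal.ofReal_mul (Real.rpow_nonneg (le_of_lt hC₀) _),
        ENNReal.ofReal_pow (le_of_lt hρpos)] at h3
      exact h3
    have hgeo : (1 - ENNReal.ofReal ρ)⁻¹ = ENNReal.ofReal σ := by
      rw [hσdef, ENNReal.ofReal_inv_of_pos (by linarith), ENNReal.ofReal_sub _ (le_of_lt hρpos),
        ENNReal.ofReal_one]
    have hsum : ∑' m : ℕ, (∫⁻ ω, (eG (fun v => X v ω) m) ^ p) ^ (1/p)
        ≤ ENNReal.ofReal (C₀ ^ (1/p)) * ENNReal.ofReal σ := by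
      calc ∑' m : ℕ, (∫⁻ ω, (eG (fun v => X v ω) m) ^ p) ^ (1/p)
          ≤ ∑' m : ℕ, ENNReal.ofReal (C₀ ^ (1/p)) * (ENNReal.ofReal ρ) ^ m :=
            ENNReal.tsum_le_tsum hm1
        _ = ENNReal.ofReal (C₀ ^ (1/p)) * ∑' m : ℕ, (ENNReal.ofReal ρ) ^ m :=
            ENNReal.tsum_mul_left
        _ = ENNReal.ofReal (C₀ ^ (1/p)) * ENNReal.ofReal σ := by
            rw [ENNReal.tsum_geometric, hgeo]
    have hmono : ∀ ω, Monotone (fun n : ℕ =>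
        (∑ m ∈ Finset.range n, eG (fun v => X v ω) m) ^ p) := by
      intro ω a b hab
      apply ENNReal.rpow_le_rpow _ hp0'
      exact Finset.sum_le_sum_of_subset (Finset.range_subset_range.2 hab)
    have hptw : ∀ ω, (∑' m, eG (fun v => X v ω) m) ^ p
        = ⨆ n : ℕ, (∑ m ∈ Finset.range n, eG (fun v => X v ω) m) ^ p := by
      intro ω
      have h1 : Filter.Tendsto (fun n : ℕ => ∑ m ∈ Finset.range n, eG (fun v => X v ω) m)
          atTop (nhds (∑' m, eG (fun v => X v ω) m)) := ENNReal.tendsto_nat_tsum _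
      have h2 : Filter.Tendsto (fun n : ℕ =>
          (∑ m ∈ Finset.range n, eG (fun v => X v ω) m) ^ p) atTop
          (nhds ((∑' m, eG (fun v => X v ω) m) ^ p)) :=
        (ENNReal.continuous_rpow_const.tendsto _).comp h1
      exact tendsto_nhds_unique h2 (tendsto_atTop_iSup (hmono ω))
    have hfinal : ∀ n : ℕ, ∫⁻ ω, (∑ m ∈ Finset.range n, eG (fun v => X v ω) m) ^ p
        ≤ (ENNReal.ofReal (C₀ ^ (1/p)) * ENNReal.ofReal σ) ^ p := by
      intro n
      have h4 := fin_mink (volume : Measure Ω) (le_of_lt hp)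
        (fun m ω => eG (fun v => X v ω) m) heGM n
      have h5 : (∫⁻ ω, (∑ m ∈ Finset.range n, eG (fun v => X v ω) m) ^ p) ^ (1/p)
          ≤ ENNReal.ofReal (C₀ ^ (1/p)) * ENNReal.ofReal σ :=
        h4.trans ((ENNReal.sum_le_tsum _).trans hsum)
      calc ∫⁻ ω, (∑ m ∈ Finset.range n, eG (fun v => X v ω) m) ^ p
          = ((∫⁻ ω, (∑ m ∈ Finset.range n, eG (fun v => X v ω) m) ^ p) ^ (1/p)) ^ p := by
            rw [← ENNReal.rpow_mul, one_div, inv_mul_cancel₀ (ne_of_gt hp0),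
              ENNReal.rpow_one]
        _ ≤ (ENNReal.ofReal (C₀ ^ (1/p)) * ENNReal.ofReal σ) ^ p :=
            ENNReal.rpow_le_rpow h5 hp0'
    calc ∫⁻ ω, (∑' m, eG (fun v => X v ω) m) ^ p
        = ∫⁻ ω, ⨆ n : ℕ, (∑ m ∈ Finset.range n, eG (fun v => X v ω) m) ^ p :=
          lintegral_congr hptw
      _ = ⨆ n : ℕ, ∫⁻ ω, (∑ m ∈ Finset.range n, eG (fun v => X v ω) m) ^ p :=
          lintegral_iSup
            (fun n => ENNReal.continuous_rpow_const.measurable.comp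
              (Finset.measurable_sum _ (fun m _ => heGM m)))
            (fun a b hab ω => hmono ω hab)
      _ ≤ (ENNReal.ofReal (C₀ ^ (1/p)) * ENNReal.ofReal σ) ^ p := iSup_le hfinal
      _ = ENNReal.ofReal (C₀ * σ ^ p) := by
          rw [← ENNReal.ofReal_mul (Real.rpow_nonneg (le_of_lt hC₀) _),
            ENNReal.ofReal_rpow_of_nonneg (by positivity) hp0']
          congr 1
          rw [Real.mul_rpow (Real.rpow_nonneg (le_of_lt hC₀) _) (le_of_lt hσpos),
            ← Real.rpow_mul (le_of_lt hC₀), one_div, inv_mul_cancel₀ (ne_of_gt hp0),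
            Real.rpow_one]
  -- the end-to-end distance term
  have hB : ∫⁻ ω, (ENNReal.ofReal (dist (X 0 ω) (X 1 ω))) ^ p ≤ ENNReal.ofReal C₀ := by
    calc ∫⁻ ω, (ENNReal.ofReal (dist (X 0 ω) (X 1 ω))) ^ p
        = ∫⁻ ω, ENNReal.ofReal (dist (X 1 ω) (X 0 ω) ^ p) :=
          lintegral_congr fun ω => by
            rw [dist_comm (X 0 ω), ENNReal.ofReal_rpow_of_nonneg dist_nonneg hp0']
      _ = ENNReal.ofReal (∫ ω, dist (X 1 ω) (X 0 ω) ^ p) :=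
          (ofReal_integral_eq_lintegral_ofReal
            (hIdist 1 0 zero_le_one le_rfl le_rfl zero_le_one)
            (Filter.Eventually.of_forall fun ω => Real.rpow_nonneg dist_nonneg p)).symm
      _ ≤ ENNReal.ofReal C₀ := by
          apply ENNReal.ofReal_le_ofReal
          have hb := hRight 0 le_rfl zero_le_one
          rw [sub_zero, Real.one_rpow, mul_one] at hb
          exact hb
  -- the starting-point term
  set W : ℝ≥0∞ := ∫⁻ ω, ∫⁻ t in Set.Ioc (0:ℝ) 1, ENNReal.ofReal (‖X t ω‖ ^ p) with hWdef
  have hmeasT : ∀ ω : Ω, Measurable (fun t : ℝ => X t ω) :=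
    fun ω => hX.comp (measurable_id.prodMk measurable_const)
  have hmeasP : Measurable (fun z : Ω × ℝ => ENNReal.ofReal (‖X z.2 z.1‖ ^ p)) := by
    apply Measurable.ennreal_ofReal
    apply hrpowM'
    exact (hX.comp measurable_swap).norm
  have hmeasD : Measurable (fun z : Ω × ℝ => ENNReal.ofReal (dist (X 0 z.1) (X z.2 z.1) ^ p)) := by
    apply Measurable.ennreal_ofReal
    apply hrpowM'
    exact ((hXt 0).comp measurable_fst).dist (hX.comp measurable_swap)
  have hA : ∫⁻ ω, (ENNReal.ofReal ‖X 0 ω‖) ^ p ≤ (2:ℝ≥0∞)^p * (W + ENNReal.ofReal C₀) := by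
    have hconst : ∀ ω : Ω, (ENNReal.ofReal ‖X 0 ω‖) ^ p
        = ∫⁻ _ in Set.Ioc (0:ℝ) 1, (ENNReal.ofReal ‖X 0 ω‖) ^ p := by
      intro ω
      rw [setLIntegral_const, Real.volume_Ioc]
      norm_num
    have hptw : ∀ ω : Ω, ∀ t : ℝ, (ENNReal.ofReal ‖X 0 ω‖) ^ p
        ≤ (2:ℝ≥0∞)^p * (ENNReal.ofReal (‖X t ω‖ ^ p)
            + ENNReal.ofReal (dist (X 0 ω) (X t ω) ^ p)) := by
      intro ω t
      have h1 : ‖X 0 ω‖ ≤ ‖X t ω‖ + dist (X 0 ω) (X t ω) := by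
        have h2 := norm_sub_norm_le (X 0 ω) (X t ω)
        rw [← dist_eq_norm] at h2
        linarith
      calc (ENNReal.ofReal ‖X 0 ω‖) ^ p
          ≤ (ENNReal.ofReal (‖X t ω‖ + dist (X 0 ω) (X t ω))) ^ p :=
            ENNReal.rpow_le_rpow (ENNReal.ofReal_le_ofReal h1) hp0'
        _ ≤ (ENNReal.ofReal ‖X t ω‖ + ENNReal.ofReal (dist (X 0 ω) (X t ω))) ^ p :=
            ENNReal.rpow_le_rpow ENNReal.ofReal_add_le hp0'
        _ ≤ (2:ℝ≥0∞)^p * ((ENNReal.ofReal ‖X t ω‖) ^ p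
              + (ENNReal.ofReal (dist (X 0 ω) (X t ω))) ^ p) := epow_add hp0' _ _
        _ = (2:ℝ≥0∞)^p * (ENNReal.ofReal (‖X t ω‖ ^ p)
              + ENNReal.ofReal (dist (X 0 ω) (X t ω) ^ p)) := by
            rw [ENNReal.ofReal_rpow_of_nonneg (norm_nonneg _) hp0',
              ENNReal.ofReal_rpow_of_nonneg dist_nonneg hp0']
    have hswap : ∫⁻ ω, ∫⁻ t in Set.Ioc (0:ℝ) 1,
          ENNReal.ofReal (dist (X 0 ω) (X t ω) ^ p)
        = ∫⁻ t in Set.Ioc (0:ℝ) 1, ∫⁻ ω, ENNReal.ofReal (dist (X 0 ω) (X t ω) ^ p) :=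
      lintegral_lintegral_swap hmeasD.aemeasurable
    have hDin : ∀ t ∈ Set.Ioc (0:ℝ) 1,
        ∫⁻ ω, ENNReal.ofReal (dist (X 0 ω) (X t ω) ^ p) ≤ ENNReal.ofReal C₀ := by
      intro t ht
      rw [← ofReal_integral_eq_lintegral_ofReal (hIdist 0 t le_rfl zero_le_one
        (le_of_lt ht.1) ht.2) (Filter.Eventually.of_forall fun ω =>
          Real.rpow_nonneg dist_nonneg p)]
      apply ENNReal.ofReal_le_ofReal
      calc ∫ ω, dist (X 0 ω) (X t ω) ^ p ≤ C₀ * t ^ r := hLeft t (le_of_lt ht.1) ht.2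
        _ ≤ C₀ * 1 := by
            apply mul_le_mul_of_nonneg_left _ (le_of_lt hC₀)
            exact Real.rpow_le_one (le_of_lt ht.1) ht.2 (le_of_lt hr)
        _ = C₀ := mul_one _
    have hD : ∫⁻ ω, ∫⁻ t in Set.Ioc (0:ℝ) 1,
        ENNReal.ofReal (dist (X 0 ω) (X t ω) ^ p) ≤ ENNReal.ofReal C₀ := by
      rw [hswap]
      calc ∫⁻ t in Set.Ioc (0:ℝ) 1, ∫⁻ ω, ENNReal.ofReal (dist (X 0 ω) (X t ω) ^ p)
          ≤ ∫⁻ _ in Set.Ioc (0:ℝ) 1, ENNReal.ofReal C₀ := by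
            apply lintegral_mono_ae
            filter_upwards [self_mem_ae_restrict measurableSet_Ioc] with t ht
            exact hDin t ht
        _ = ENNReal.ofReal C₀ := by
            rw [setLIntegral_const, Real.volume_Ioc]
            norm_num
    calc ∫⁻ ω, (ENNReal.ofReal ‖X 0 ω‖) ^ p
        = ∫⁻ ω, ∫⁻ _ in Set.Ioc (0:ℝ) 1, (ENNReal.ofReal ‖X 0 ω‖) ^ p :=
          lintegral_congr hconst
      _ ≤ ∫⁻ ω, ∫⁻ t in Set.Ioc (0:ℝ) 1, (2:ℝ≥0∞)^p * (ENNReal.ofReal (‖X t ω‖ ^ p)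
            + ENNReal.ofReal (dist (X 0 ω) (X t ω) ^ p)) :=
          lintegral_mono fun ω => lintegral_mono fun t => hptw ω t
      _ = ∫⁻ ω, (2:ℝ≥0∞)^p * ((∫⁻ t in Set.Ioc (0:ℝ) 1, ENNReal.ofReal (‖X t ω‖ ^ p))
            + ∫⁻ t in Set.Ioc (0:ℝ) 1, ENNReal.ofReal (dist (X 0 ω) (X t ω) ^ p)) := by
          apply lintegral_congr
          intro ω
          have hm1 : Measurable fun t : ℝ => ENNReal.ofReal (‖X t ω‖ ^ p) :=
            Measurable.ennreal_ofReal (hrpowM' _ (hmeasT ω).norm)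
          have hm2 : Measurable fun t : ℝ => ENNReal.ofReal (dist (X 0 ω) (X t ω) ^ p) :=
            Measurable.ennreal_ofReal (hrpowM' _ (measurable_const.dist (hmeasT ω)))
          rw [lintegral_const_mul _ (by exact hm1.add hm2), lintegral_add_left hm1]
      _ = (2:ℝ≥0∞)^p * (W + ∫⁻ ω, ∫⁻ t in Set.Ioc (0:ℝ) 1,
            ENNReal.ofReal (dist (X 0 ω) (X t ω) ^ p)) := by
          rw [lintegral_const_mul _ (by exact ((hmeasP.lintegral_prod_right').add
            hmeasD.lintegral_prod_right')), lintegral_add_left hmeasP.lintegral_prod_right']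
      _ ≤ (2:ℝ≥0∞)^p * (W + ENNReal.ofReal C₀) := by
          apply mul_le_mul_right
          exact add_le_add_right hD _
  -- main lintegral estimate
  set T : ℝ≥0∞ := ∫⁻ ω, (ENNReal.ofReal (supNorm (fun v => X v ω))) ^ p with hTdef
  have hT : T ≤ ENNReal.ofReal N * (ENNReal.ofReal C₀ + W) := by
    have h2p1 : (1:ℝ≥0∞) ≤ (2:ℝ≥0∞)^p := by
      calc (1:ℝ≥0∞) = (2:ℝ≥0∞)^(0:ℝ) := by rw [ENNReal.rpow_zero]
        _ ≤ (2:ℝ≥0∞)^p := ENNReal.rpow_le_rpow_of_exponent_le (by norm_num) hp0'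
    have hptw : ∀ᵐ ω, (ENNReal.ofReal (supNorm (fun v => X v ω)))^p
        ≤ (2:ℝ≥0∞)^p * (2:ℝ≥0∞)^p * ((ENNReal.ofReal ‖X 0 ω‖)^p
            + (ENNReal.ofReal (dist (X 0 ω) (X 1 ω)))^p
            + (∑' m, eG (fun v => X v ω) m)^p) := by
      filter_upwards [hG2] with ω hω
      set A := ENNReal.ofReal ‖X 0 ω‖
      set B := ENNReal.ofReal (dist (X 0 ω) (X 1 ω))
      set C := ∑' m, eG (fun v => X v ω) m
      calc (ENNReal.ofReal (supNorm (fun v => X v ω)))^p ≤ (A + B + C)^p :=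
          ENNReal.rpow_le_rpow hω hp0'
        _ ≤ 2^p * ((A+B)^p + C^p) := epow_add hp0' _ _
        _ ≤ 2^p * ((2^p * (A^p + B^p)) + C^p) := by
            apply mul_le_mul_right
            exact add_le_add_left (epow_add hp0' _ _) _
        _ ≤ 2^p * 2^p * (A^p + B^p + C^p) := by
            rw [mul_assoc]
            apply mul_le_mul_right
            calc 2^p * (A^p + B^p) + C^p
                ≤ 2^p * (A^p + B^p) + 2^p * C^p :=
                  add_le_add le_rfl (le_mul_of_one_le_left zero_le h2p1)
              _ = 2^p * (A^p + B^p + C^p) := (mul_add _ _ _).symm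
    have hmA : Measurable fun ω => (ENNReal.ofReal ‖X 0 ω‖)^p :=
      ENNReal.continuous_rpow_const.measurable.comp (hXt 0).norm.ennreal_ofReal
    have hmB : Measurable fun ω => (ENNReal.ofReal (dist (X 0 ω) (X 1 ω)))^p :=
      ENNReal.continuous_rpow_const.measurable.comp ((hXt 0).dist (hXt 1)).ennreal_ofReal
    have hmC : Measurable fun ω => (∑' m, eG (fun v => X v ω) m)^p :=
      ENNReal.continuous_rpow_const.measurable.comp (Measurable.ennreal_tsum heGM)
    have hstep : T ≤ (2:ℝ≥0∞)^p * (2:ℝ≥0∞)^p * ((∫⁻ ω, (ENNReal.ofReal ‖X 0 ω‖)^p)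
        + (∫⁻ ω, (ENNReal.ofReal (dist (X 0 ω) (X 1 ω)))^p)
        + ∫⁻ ω, (∑' m, eG (fun v => X v ω) m)^p) := by
      calc T ≤ ∫⁻ ω, (2:ℝ≥0∞)^p * (2:ℝ≥0∞)^p * ((ENNReal.ofReal ‖X 0 ω‖)^p
            + (ENNReal.ofReal (dist (X 0 ω) (X 1 ω)))^p
            + (∑' m, eG (fun v => X v ω) m)^p) := lintegral_mono_ae hptw
        _ = _ := by
            rw [lintegral_const_mul _ (by exact (hmA.add hmB).add hmC),
              lintegral_add_left (by exact hmA.add hmB), lintegral_add_left hmA]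
    have hCs : ENNReal.ofReal (C₀ * σ^p) = ENNReal.ofReal C₀ * ENNReal.ofReal (σ^p) :=
      ENNReal.ofReal_mul (le_of_lt hC₀)
    have hN : ENNReal.ofReal N
        = (2:ℝ≥0∞)^p * (2:ℝ≥0∞)^p * ((2:ℝ≥0∞)^p + 1 + ENNReal.ofReal (σ^p)) := by
      have ha : (2:ℝ≥0∞)^p = ENNReal.ofReal ((2:ℝ)^p) := by
        calc (2:ℝ≥0∞)^p = (ENNReal.ofReal 2)^p := by norm_num
          _ = ENNReal.ofReal ((2:ℝ)^p) := ENNReal.ofReal_rpow_of_nonneg (by norm_num) hp0'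
      rw [hNdef, ENNReal.ofReal_mul (by positivity), ENNReal.ofReal_mul (by positivity),
        ENNReal.ofReal_add (by positivity) (by positivity),
        ENNReal.ofReal_add (by positivity) (by positivity), ENNReal.ofReal_one, ha]
    calc T ≤ (2:ℝ≥0∞)^p * (2:ℝ≥0∞)^p * ((∫⁻ ω, (ENNReal.ofReal ‖X 0 ω‖)^p)
          + (∫⁻ ω, (ENNReal.ofReal (dist (X 0 ω) (X 1 ω)))^p)
          + ∫⁻ ω, (∑' m, eG (fun v => X v ω) m)^p) := hstep
      _ ≤ (2:ℝ≥0∞)^p * (2:ℝ≥0∞)^p * (((2:ℝ≥0∞)^p * (W + ENNReal.ofReal C₀))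
          + ENNReal.ofReal C₀ + ENNReal.ofReal C₀ * ENNReal.ofReal (σ^p)) := by
          apply mul_le_mul_right
          exact add_le_add (add_le_add hA hB) (hC.trans_eq hCs)
      _ ≤ ENNReal.ofReal N * (ENNReal.ofReal C₀ + W) := by
          rw [hN, mul_assoc ((2:ℝ≥0∞)^p * (2:ℝ≥0∞)^p)]
          apply mul_le_mul_right
          rw [add_mul, add_mul, one_mul]
          apply add_le_add (add_le_add ?_ ?_) ?_
          · rw [add_comm W (ENNReal.ofReal C₀)]
          · exact le_self_add
          · rw [mul_comm (ENNReal.ofReal C₀) (ENNReal.ofReal (σ^p))]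
            exact mul_le_mul_right le_self_add _
  -- identification of the left-hand side
  have hLHS : (∫ ω, supNorm (fun v => X v ω) ^ p) = T.toReal := by
    rw [integral_eq_lintegral_of_nonneg_ae
      (Filter.Eventually.of_forall fun ω => Real.rpow_nonneg (supNorm_nonneg _) p)
      hInt.1]
    congr 1
    apply lintegral_congr
    intro ω
    exact (ENNReal.ofReal_rpow_of_nonneg (supNorm_nonneg _) hp0').symm
  -- identification of the right-hand side and finiteness
  have hVol : (volume : Measure ℝ) (Set.Ioc (0:ℝ) 1) < ⊤ := by
    rw [Real.volume_Ioc]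
    exact ENNReal.ofReal_lt_top
  have hInnInt : ∀ᵐ ω, IntegrableOn (fun t => ‖X t ω‖ ^ p) (Set.Ioc (0:ℝ) 1) := by
    filter_upwards [hG1] with ω hω
    apply Integrable.mono' (g := fun _ : ℝ => supNorm (fun v => X v ω) ^ p)
      (integrableOn_const hVol.ne)
      (hrpowM' _ (hmeasT ω).norm).aestronglyMeasurable
    filter_upwards [self_mem_ae_restrict measurableSet_Ioc] with t ht
    rw [Real.norm_eq_abs, abs_of_nonneg (Real.rpow_nonneg (norm_nonneg _) p)]
    exact Real.rpow_le_rpow (norm_nonneg _) (hω t (le_of_lt ht.1) ht.2) hp0' 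
  have hInnEq : ∀ᵐ ω, ENNReal.ofReal (∫ t in (0:ℝ)..1, ‖X t ω‖ ^ p)
      = ∫⁻ t in Set.Ioc (0:ℝ) 1, ENNReal.ofReal (‖X t ω‖ ^ p) := by
    filter_upwards [hInnInt] with ω hI
    rw [intervalIntegral.integral_of_le (by norm_num : (0:ℝ) ≤ 1)]
    exact ofReal_integral_eq_lintegral_ofReal hI
      (Filter.Eventually.of_forall fun t => Real.rpow_nonneg (norm_nonneg _) p)
  have hOutInt : Integrable (fun ω => ∫ t in (0:ℝ)..1, ‖X t ω‖ ^ p) := by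
    have hfe : (fun ω => ∫ t in (0:ℝ)..1, ‖X t ω‖ ^ p)
        = fun ω => ∫ t in Set.Ioc (0:ℝ) 1, ‖X t ω‖ ^ p :=
      funext fun ω => intervalIntegral.integral_of_le (by norm_num)
    rw [hfe]
    have hsm : StronglyMeasurable (fun ω => ∫ t in Set.Ioc (0:ℝ) 1, ‖X t ω‖ ^ p) := by
      have hu : StronglyMeasurable (Function.uncurry fun (ω : Ω) (t : ℝ) => ‖X t ω‖ ^ p) :=
        (hrpowM' _ (hX.comp measurable_swap).norm).stronglyMeasurable
      exact hu.integral_prod_right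
    apply hInt.mono' hsm.aestronglyMeasurable
    filter_upwards [hG1, hInnInt] with ω hω hI
    have hnn : 0 ≤ ∫ t in Set.Ioc (0:ℝ) 1, ‖X t ω‖ ^ p :=
      setIntegral_nonneg measurableSet_Ioc (fun t _ => Real.rpow_nonneg (norm_nonneg _) p)
    rw [Real.norm_eq_abs, abs_of_nonneg hnn]
    calc ∫ t in Set.Ioc (0:ℝ) 1, ‖X t ω‖ ^ p
        ≤ ∫ _ in Set.Ioc (0:ℝ) 1, supNorm (fun v => X v ω) ^ p :=
          setIntegral_mono_on hI (integrableOn_const hVol.ne) measurableSet_Ioc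
            (fun t ht => Real.rpow_le_rpow (norm_nonneg _) (hω t (le_of_lt ht.1) ht.2) hp0')
      _ = supNorm (fun v => X v ω) ^ p := by
          rw [setIntegral_const, Real.volume_real_Ioc]
          norm_num
  have hWeq : W = ENNReal.ofReal (∫ ω, ∫ t in (0:ℝ)..1, ‖X t ω‖ ^ p) := by
    rw [ofReal_integral_eq_lintegral_ofReal hOutInt (Filter.Eventually.of_forall hInner0)]
    exact (lintegral_congr_ae hInnEq).symm
  -- conclusion
  rw [hLHS]
  apply ENNReal.toReal_le_of_le_ofReal
  · have h1 : 0 ≤ ∫ ω, ∫ t in (0:ℝ)..1, ‖X t ω‖ ^ p := by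
      apply integral_nonneg
      intro ω
      exact hInner0 ω
    positivity
  · calc T ≤ ENNReal.ofReal N * (ENNReal.ofReal C₀ + W) := hT
      _ = ENNReal.ofReal (N * (C₀ + ∫ ω, ∫ t in (0:ℝ)..1, ‖X t ω‖ ^ p)) := by
          rw [hWeq, ← ENNReal.ofReal_add (le_of_lt hC₀) (integral_nonneg hInner0),
            ← ENNReal.ofReal_mul (le_of_lt hNpos)]
end
end

section
/- For μ ∈ (0,1) and any f ∈ D([0,1],E), the Hölder seminorm satisfies [f]_μ ≤ sup_{s≤t≤u, u−s ≤ 1/2} Δ(f;s,t,u)/(u−s)^μ + 2^μ·Δ(f;(0,1)), where Δ(f;(0,1)) = sup_{0≤s≤t≤u≤1} d(f(s),f(t)) ∧ d(f(t),f(u)). -/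
open MeasureTheory Set Filter

noncomputable section

theorem stmt17 {E : Type*} [MetricSpace E] (μ : ℝ) (hμ : μ ∈ Set.Ioo (0:ℝ) 1)
    (f : ℝ → E) (hf : IsCadlagOn f) :
    holderSemi μ f ≤
      sSup {x : ℝ | ∃ s t u : ℝ, 0 ≤ s ∧ s ≤ t ∧ t ≤ u ∧ u ≤ 1 ∧ u - s ≤ 1 / 2 ∧
        x = tripleDelta f s t u / (u - s) ^ μ} + 2 ^ μ * deltaMod f 0 1 := by
  obtain ⟨hμ0, hμ1⟩ := hμ
  set S := {x : ℝ | ∃ s t u : ℝ, 0 ≤ s ∧ s ≤ t ∧ t ≤ u ∧ u ≤ 1 ∧ u - s ≤ 1 / 2 ∧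
        x = tripleDelta f s t u / (u - s) ^ μ} with hSdef
  set D := {x : ℝ | ∃ s t u : ℝ, (0:ℝ) ≤ s ∧ s ≤ t ∧ t ≤ u ∧ u ≤ 1 ∧
        x = tripleDelta f s t u} with hDdef
  have hΔnn : ∀ s t u : ℝ, 0 ≤ tripleDelta f s t u := fun s t u =>
    le_min dist_nonneg dist_nonneg
  have hDM : deltaMod f 0 1 = sSup D := rfl
  have hSnn : ∀ x ∈ S, 0 ≤ x := by
    rintro x ⟨s, t, u, hs, hst, htu, hu1, _, rfl⟩
    exact div_nonneg (hΔnn _ _ _) (Real.rpow_nonneg (by linarith) μ)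
  have hSsup_nn : 0 ≤ sSup S := Real.sSup_nonneg hSnn
  have hMnn : 0 ≤ deltaMod f 0 1 := by
    rw [hDM]
    exact Real.sSup_nonneg (by rintro x ⟨s, t, u, _, _, _, _, rfl⟩; exact hΔnn _ _ _)
  have h2μ : (0:ℝ) < 2 ^ μ := Real.rpow_pos_of_pos (by norm_num) μ
  have hRHSnn : 0 ≤ sSup S + 2 ^ μ * deltaMod f 0 1 :=
    add_nonneg hSsup_nn (mul_nonneg h2μ.le hMnn)
  -- each element of D is dominated by an element of holderSet
  have hdom : ∀ m ∈ D, ∃ x ∈ holderSet μ f, m ≤ x := by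
    rintro m ⟨s, t, u, hs, hst, htu, hu1, rfl⟩
    refine ⟨tripleDelta f s t u / (u - s) ^ μ, ⟨s, t, u, hs, hst, htu, hu1, rfl⟩, ?_⟩
    rcases eq_or_lt_of_le (show s ≤ u by linarith) with heq | hlt
    · have hts : t = s := le_antisymm (heq ▸ htu) hst
      have : tripleDelta f s t u = 0 := by
        simp [tripleDelta, hts, heq]
      rw [this]; simp
    · have hpos : 0 < u - s := by linarith
      have hle1 : (u - s) ^ μ ≤ 1 := Real.rpow_le_one (by linarith) (by linarith) hμ0.le
      have hppos : 0 < (u - s) ^ μ := Real.rpow_pos_of_pos hpos μ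
      rw [le_div_iff₀ hppos]
      exact mul_le_of_le_one_right (hΔnn _ _ _) hle1
  by_cases hH : BddAbove (holderSet μ f)
  swap
  · rw [holderSemi, Real.sSup_of_not_bddAbove hH]; exact hRHSnn
  have hD : BddAbove D := by
    obtain ⟨b, hb⟩ := hH
    exact ⟨b, fun m hm => by obtain ⟨x, hx, hmx⟩ := hdom m hm; exact hmx.trans (hb hx)⟩
  have hBS : BddAbove S :=
    hH.mono (by rintro x ⟨s, t, u, hs, hst, htu, hu1, _, rfl⟩
                exact ⟨s, t, u, hs, hst, htu, hu1, rfl⟩)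
  rw [holderSemi]
  refine Real.sSup_le ?_ hRHSnn
  rintro x ⟨s, t, u, hs, hst, htu, hu1, rfl⟩
  by_cases hcase : u - s ≤ 1 / 2
  · have hx : tripleDelta f s t u / (u - s) ^ μ ≤ sSup S :=
      le_csSup hBS ⟨s, t, u, hs, hst, htu, hu1, hcase, rfl⟩
    linarith [mul_nonneg h2μ.le hMnn]
  · push_neg at hcase
    have hΔM : tripleDelta f s t u ≤ deltaMod f 0 1 := by
      rw [hDM]; exact le_csSup hD ⟨s, t, u, hs, hst, htu, hu1, rfl⟩
    have hhalf : (0:ℝ) < ((1:ℝ)/2) ^ μ := Real.rpow_pos_of_pos (by norm_num) μ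
    have hmono : ((1:ℝ)/2) ^ μ ≤ (u - s) ^ μ :=
      Real.rpow_le_rpow (by norm_num) hcase.le hμ0.le
    have h1 : tripleDelta f s t u / (u - s) ^ μ ≤ deltaMod f 0 1 / ((1:ℝ)/2) ^ μ :=
      div_le_div₀ hMnn hΔM hhalf hmono
    have h2 : deltaMod f 0 1 / ((1:ℝ)/2) ^ μ = 2 ^ μ * deltaMod f 0 1 := by
      rw [show ((1:ℝ)/2) = (2:ℝ)⁻¹ by norm_num, Real.inv_rpow (by norm_num), div_eq_mul_inv, inv_inv,
        mul_comm]
    linarith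
end
end

section
/- Let f : [0,1] → ℝ^k be a function with finite left-endpoint Hölder seminorm |f]_μ = sup_{t∈(0,1]} |f(0)−f(t)|/t^μ, μ ∈ (0,1), p ≥ 1. Then sup_{0≤t≤1} |f(t)| ≤ 2·|f]_μ + ( ∫₀¹ |f(τ)|^p dτ )^{1/p}. -/
open MeasureTheory Set Filter

noncomputable section

theorem stmt19 (k : ℕ) (f : ℝ → EuclideanSpace ℝ (Fin k)) (hf : Measurable f)
    (μ p : ℝ) (hμ : μ ∈ Set.Ioo (0:ℝ) 1) (hp : 1 ≤ p)
    (hfin : BddAbove (leftSet μ f)) :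
    supNorm f ≤ 2 * leftSemi μ f + (∫ τ in (0:ℝ)..1, ‖f τ‖ ^ p) ^ (1 / p) := by

  set L := leftSemi μ f with hLdef
  -- leftSet is nonempty
  have hne : (leftSet μ f).Nonempty := ⟨dist (f 0) (f 1) / (1:ℝ) ^ μ, 1, one_pos, le_refl 1, rfl⟩
  have hL0 : 0 ≤ L := by
    have h1 : dist (f 0) (f 1) / (1:ℝ) ^ μ ∈ leftSet μ f := ⟨1, one_pos, le_refl 1, rfl⟩
    have := le_csSup hfin h1
    have hpos : (0:ℝ) ≤ dist (f 0) (f 1) / (1:ℝ) ^ μ := by positivity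
    exact le_trans hpos this
  -- key bound
  have hkey : ∀ t : ℝ, 0 < t → t ≤ 1 → dist (f 0) (f t) ≤ L := by
    intro t ht ht1
    have hmem : dist (f 0) (f t) / t ^ μ ∈ leftSet μ f := ⟨t, ht, ht1, rfl⟩
    have hle := le_csSup hfin hmem
    have htpow : (0:ℝ) < t ^ μ := Real.rpow_pos_of_pos ht μ
    have h2 : dist (f 0) (f t) ≤ L * t ^ μ := by
      rw [div_le_iff₀ htpow] at hle; exact hle
    have h3 : t ^ μ ≤ 1 := Real.rpow_le_one (le_of_lt ht) ht1 (le_of_lt hμ.1)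
    calc dist (f 0) (f t) ≤ L * t ^ μ := h2
      _ ≤ L * 1 := by exact mul_le_mul_of_nonneg_left h3 hL0
      _ = L := mul_one L
  have hkey0 : ∀ t : ℝ, 0 ≤ t → t ≤ 1 → dist (f 0) (f t) ≤ L := by
    intro t ht ht1
    rcases eq_or_lt_of_le ht with h | h
    · simp [← h, hL0]
    · exact hkey t h ht1
  set I := (∫ τ in (0:ℝ)..1, ‖f τ‖ ^ p) ^ (1 / p) with hIdef
  have hp0 : 0 < p := lt_of_lt_of_le one_pos hp
  -- integrability of ‖f τ‖ ^ p on Ioc 0 1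
  have hmeas : Measurable fun τ => ‖f τ‖ ^ p := (hf.norm).pow measurable_const
  have hbd : ∀ τ ∈ Set.Ioc (0:ℝ) 1, ‖f τ‖ ^ p ≤ (‖f 0‖ + L) ^ p := by
    intro τ hτ
    have h1 : ‖f τ‖ ≤ ‖f 0‖ + L := by
      have := hkey τ hτ.1 hτ.2
      have h2 : ‖f τ‖ ≤ ‖f 0‖ + dist (f 0) (f τ) := by
        have := dist_triangle (f τ) (f 0) 0
        simp only [dist_zero_right] at this
        calc ‖f τ‖ ≤ dist (f τ) (f 0) + ‖f 0‖ := this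
          _ = ‖f 0‖ + dist (f 0) (f τ) := by rw [dist_comm]; ring
      linarith
    exact Real.rpow_le_rpow (norm_nonneg _) h1 (le_of_lt hp0)
  have hint : IntervalIntegrable (fun τ => ‖f τ‖ ^ p) MeasureTheory.volume 0 1 := by
    rw [intervalIntegrable_iff_integrableOn_Ioc_of_le (by norm_num : (0:ℝ) ≤ 1)]
    apply Measure.integrableOn_of_bounded (M := (‖f 0‖ + L) ^ p)
    · simp
    · exact hmeas.aestronglyMeasurable
    · filter_upwards [ae_restrict_mem measurableSet_Ioc] with τ hτ
      rw [Real.norm_eq_abs, abs_of_nonneg (Real.rpow_nonneg (norm_nonneg _) p)]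
      exact hbd τ hτ
  have hI0 : 0 ≤ I := by
    apply Real.rpow_nonneg
    apply intervalIntegral.integral_nonneg (by norm_num)
    intro τ _; exact Real.rpow_nonneg (norm_nonneg _) p
  -- ‖f 0‖ ≤ L + I
  have hf0 : ‖f 0‖ ≤ L + I := by
    by_cases hc : ‖f 0‖ ≤ L
    · linarith
    · push_neg at hc
      set c := ‖f 0‖ - L with hcdef
      have hcpos : 0 < c := by simp [hcdef]; linarith
      have hcle : ∀ τ ∈ Set.Ioc (0:ℝ) 1, c ≤ ‖f τ‖ := by
        intro τ hτ
        have h1 := hkey τ hτ.1 hτ.2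
        have h2 : ‖f 0‖ ≤ dist (f 0) (f τ) + ‖f τ‖ := by
          have := dist_triangle (f 0) (f τ) 0
          simpa [dist_zero_right] using this
        simp only [hcdef]; linarith
      have hmono : c ^ p ≤ ∫ τ in (0:ℝ)..1, ‖f τ‖ ^ p := by
        have h1 : (∫ τ in (0:ℝ)..1, c ^ p) = c ^ p := by simp
        rw [← h1]
        apply intervalIntegral.integral_mono_on (by norm_num : (0:ℝ) ≤ 1)
          (intervalIntegrable_const) hint
        intro τ hτ
        rcases eq_or_lt_of_le hτ.1 with h | h
        · have : c ≤ ‖f 0‖ := by simp [hcdef]; linarith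
          rw [← h]
          exact Real.rpow_le_rpow (le_of_lt hcpos) this (le_of_lt hp0)
        · exact Real.rpow_le_rpow (le_of_lt hcpos) (hcle τ ⟨h, hτ.2⟩) (le_of_lt hp0)
      have h2 : c ≤ I := by
        have : c = (c ^ p) ^ (1 / p) := by
          rw [← Real.rpow_mul (le_of_lt hcpos), mul_one_div, div_self (ne_of_gt hp0),
            Real.rpow_one]
        rw [this]
        exact Real.rpow_le_rpow (Real.rpow_nonneg (le_of_lt hcpos) p) hmono
          (by positivity)
      simp only [hcdef] at h2; linarith
  -- finish
  have hsup : supNorm f ≤ ‖f 0‖ + L := by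
    apply csSup_le
    · exact ⟨‖f 0‖, 0, le_refl 0, by norm_num, rfl⟩
    rintro x ⟨t, ht, ht1, rfl⟩
    have h2 : ‖f t‖ ≤ ‖f 0‖ + dist (f 0) (f t) := by
      have := dist_triangle (f t) (f 0) 0
      simp only [dist_zero_right] at this
      calc ‖f t‖ ≤ dist (f t) (f 0) + ‖f 0‖ := this
        _ = ‖f 0‖ + dist (f 0) (f t) := by rw [dist_comm]; ring
    linarith [hkey0 t ht ht1]
  calc supNorm f ≤ ‖f 0‖ + L := hsup
    _ ≤ (L + I) + L := by linarith
    _ = 2 * L + I := by ring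
end
end
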